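/- arXiv:2204.08827 — 4 statements merged into one kernel-verified Lean document; each statement's English description precedes it below -/
import Mathlib

section
/- Under Assumptions (B1)–(B3), there exists a constant C > 0, depending only on Y(0), φ, ψ, the drift b (through c1, c2, p, y_*, γ), λ and T (in particular not on Z or Λ), such that for every noise path Z with Hölder constant Λ, the pathwise solution Y satisfies |Y(t) − Y(s)| ≤ C·(1 + Λ^{max{p, γλ+λ−1}/(γλ+λ−1)})·|t − s|^λ for all s, t ∈ [0,T]. -/
open MeasureTheory

lemma holder_contOn (T K lam : ℝ) (hK : 0 < K) (hlam : 0 < lam) (f : ℝ → ℝ)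
    (hf : ∀ s ∈ Set.Icc (0:ℝ) T, ∀ t ∈ Set.Icc (0:ℝ) T, |f t - f s| ≤ K * |t - s| ^ lam) :
    ContinuousOn f (Set.Icc 0 T) := by
  intro s hs
  rw [Metric.continuousWithinAt_iff]
  intro e he
  refine ⟨(e / (K + 1)) ^ (1 / lam), Real.rpow_pos_of_pos (by positivity) _, ?_⟩
  intro t ht hd
  have h1 : |t - s| ≤ (e / (K + 1)) ^ (1 / lam) := le_of_lt (by simpa [Real.dist_eq] using hd)
  have hEK : (0:ℝ) < e / (K + 1) := by positivity
  calc dist (f t) (f s) = |f t - f s| := Real.dist_eq _ _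
    _ ≤ K * |t - s| ^ lam := hf s hs t ht
    _ ≤ K * ((e / (K + 1)) ^ (1 / lam)) ^ lam := by
        gcongr
    _ = K * (e / (K + 1)) := by
        rw [← Real.rpow_mul hEK.le, one_div, inv_mul_cancel₀ (ne_of_gt hlam), Real.rpow_one]
    _ < (K + 1) * (e / (K + 1)) := by gcongr; linarith
    _ = e := by field_simp

lemma aux_num (lam alp c2 gam M eps : ℝ) (hl0 : 0 < lam) (hl1 : lam < 1)
    (hc2 : 0 < c2) (hgam : 0 < gam) (hM : 0 < M) (heps : 0 < eps)
    (halp : alp = gam * lam + lam - 1) (hpos : 0 < alp)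
    (heB : eps ≤ (c2 * 2 ^ (-gam)) ^ (lam / alp) * M ^ (-(1 / alp))) :
    ∀ h : ℝ, 0 < h → -eps ≤ c2 / (2 * eps) ^ gam * h - M * h ^ lam := by
  intro h hh
  have hBpos : 0 < c2 / (2 * eps) ^ gam := by positivity
  rcases le_or_gt (M * h ^ lam) eps with hc | hc
  · nlinarith [mul_pos hBpos hh]
  · -- key : eps ^ (alp/lam) * M ^ (1/lam) ≤ c2 * 2 ^ (-gam)
    have hkey : eps ^ (alp / lam) * M ^ (1 / lam) ≤ c2 * 2 ^ (-gam) := by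
      have h1 : eps ^ (alp / lam) ≤ (c2 * 2 ^ (-gam)) * M ^ (-(1 / lam)) := by
        have h2 := Real.rpow_le_rpow heps.le heB (by positivity : (0:ℝ) ≤ alp / lam)
        calc eps ^ (alp / lam)
            ≤ ((c2 * 2 ^ (-gam)) ^ (lam / alp) * M ^ (-(1 / alp))) ^ (alp / lam) := h2
          _ = (c2 * 2 ^ (-gam)) * M ^ (-(1 / lam)) := by
              rw [Real.mul_rpow (by positivity) (by positivity),
                  ← Real.rpow_mul (by positivity), ← Real.rpow_mul hM.le]
              have e1 : lam / alp * (alp / lam) = 1 := by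
                field_simp
              have e2 : -(1 / alp) * (alp / lam) = -(1 / lam) := by
                field_simp
              rw [e1, e2, Real.rpow_one]
      have h2 := mul_le_mul_of_nonneg_right h1 (Real.rpow_pos_of_pos hM (1 / lam)).le
      rwa [mul_assoc, ← Real.rpow_add hM, neg_add_cancel, Real.rpow_zero, mul_one] at h2
    -- h > (eps/M)^(1/lam)
    have h0pos : (0:ℝ) < (eps / M) ^ (1 / lam) := by positivity
    have hhl : eps / M < h ^ lam := by
      rw [div_lt_iff₀ hM]
      linarith [hc]
    have hh0 : (eps / M) ^ (1 / lam) < h := by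
      have h2 : ((h ^ lam) ^ (1 / lam)) = h := by
        rw [← Real.rpow_mul hh.le, mul_one_div, div_self (ne_of_gt hl0), Real.rpow_one]
      calc (eps / M) ^ (1 / lam) < (h ^ lam) ^ (1 / lam) :=
            Real.rpow_lt_rpow (by positivity) hhl (by positivity)
        _ = h := h2
    -- main : M * h^lam ≤ B * h
    have hstep : M ≤ c2 / (2 * eps) ^ gam * h ^ (1 - lam) := by
      have hmono : ((eps / M) ^ (1 / lam)) ^ (1 - lam) ≤ h ^ (1 - lam) :=
        Real.rpow_le_rpow h0pos.le hh0.le (by linarith)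
      have hq : ((eps / M) ^ (1 / lam)) ^ (1 - lam)
          = eps ^ ((1 - lam) / lam) * (M ^ ((1 - lam) / lam))⁻¹ := by
        rw [← Real.rpow_mul (by positivity : (0:ℝ) ≤ eps / M)]
        have e3 : 1 / lam * (1 - lam) = (1 - lam) / lam := by ring
        rw [e3, Real.div_rpow heps.le hM.le, div_eq_mul_inv]
      have htarget : M ≤ c2 / (2 * eps) ^ gam * (eps ^ ((1 - lam) / lam) * (M ^ ((1 - lam) / lam))⁻¹) := by
        have hE2 : (2 * eps) ^ gam = 2 ^ gam * eps ^ gam :=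
          Real.mul_rpow (by norm_num) heps.le
        have hE1 : eps ^ ((1 - lam) / lam) = eps ^ gam * (eps ^ (alp / lam))⁻¹ := by
          rw [← Real.rpow_neg heps.le, ← Real.rpow_add heps]
          congr 1
          rw [halp]
          field_simp
          ring
        have hMW : M * M ^ ((1 - lam) / lam) = M ^ (1 / lam) := by
          nth_rewrite 1 [← Real.rpow_one M]
          rw [← Real.rpow_add hM]
          congr 1
          field_simp
          ring
        have h2g : (2:ℝ) ^ (-gam) = ((2:ℝ) ^ gam)⁻¹ := by
          rw [Real.rpow_neg (by norm_num)]
        have hX : (0:ℝ) < eps ^ (alp / lam) := Real.rpow_pos_of_pos heps _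
        have hW : (0:ℝ) < M ^ ((1 - lam) / lam) := Real.rpow_pos_of_pos hM _
        have hG : (0:ℝ) < eps ^ gam := Real.rpow_pos_of_pos heps _
        have h2gp : (0:ℝ) < (2:ℝ) ^ gam := Real.rpow_pos_of_pos (by norm_num) _
        rw [hE2, hE1]
        rw [h2g] at hkey
        rw [div_mul_eq_mul_div, le_div_iff₀ (by positivity)]
        have hkey2 : eps ^ (alp / lam) * (M * M ^ ((1 - lam) / lam)) * 2 ^ gam ≤ c2 := by
          rw [hMW]
          calc eps ^ (alp / lam) * M ^ (1 / lam) * 2 ^ gam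
              ≤ c2 * (2 ^ gam)⁻¹ * 2 ^ gam := by gcongr
            _ = c2 := by field_simp
        have expand : M * (2 ^ gam * eps ^ gam)
            = (eps ^ (alp / lam) * (M * M ^ ((1 - lam) / lam)) * 2 ^ gam)
              * (eps ^ gam * (eps ^ (alp / lam))⁻¹ * (M ^ ((1 - lam) / lam))⁻¹) := by
          field_simp
        rw [expand]
        exact mul_le_mul_of_nonneg_right hkey2 (by positivity)
      calc M ≤ c2 / (2 * eps) ^ gam * ((eps / M) ^ (1 / lam)) ^ (1 - lam) := by rw [hq]; exact htarget
        _ ≤ c2 / (2 * eps) ^ gam * h ^ (1 - lam) := by gcongr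
    have hfin : M * h ^ lam ≤ c2 / (2 * eps) ^ gam * h := by
      have hh1 : h ^ lam * h ^ (1 - lam) = h := by
        rw [← Real.rpow_add hh]
        norm_num
      have := mul_le_mul_of_nonneg_right hstep (Real.rpow_pos_of_pos hh lam).le
      calc M * h ^ lam ≤ c2 / (2 * eps) ^ gam * h ^ (1 - lam) * h ^ lam := this
        _ = c2 / (2 * eps) ^ gam * h := by rw [mul_assoc, mul_comm (h ^ (1-lam)), hh1]
    linarith [heps]

lemma aux_barrier (T lam eps M B : ℝ) (g : ℝ → ℝ)
    (heps : 0 < eps) (hT : 0 ≤ T)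
    (hg0 : 2 * eps ≤ g 0)
    (hgc : ContinuousOn g (Set.Icc 0 T))
    (hdrift : ∀ u v : ℝ, u ∈ Set.Icc 0 T → v ∈ Set.Icc 0 T → u < v →
      (∀ w ∈ Set.Icc u v, g w ≤ 2 * eps) → B * (v - u) - M * (v - u) ^ lam ≤ g v - g u)
    (hnum : ∀ h : ℝ, 0 < h → -eps ≤ B * h - M * h ^ lam) :
    ∀ t ∈ Set.Icc 0 T, eps ≤ g t := by
  by_contra hcon
  push_neg at hcon
  obtain ⟨t1, ht1, hlt⟩ := hcon
  have ht10 : (0:ℝ) ≤ t1 := ht1.1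
  set S := Set.Icc (0:ℝ) t1 ∩ g ⁻¹' Set.Ici (2 * eps) with hS
  have hsub1 : Set.Icc (0:ℝ) t1 ⊆ Set.Icc 0 T := Set.Icc_subset_Icc le_rfl ht1.2
  have hScl : IsClosed S :=
    (hgc.mono hsub1).preimage_isClosed_of_isClosed isClosed_Icc isClosed_Ici
  have hScp : IsCompact S :=
    isCompact_Icc.of_isClosed_subset hScl Set.inter_subset_left
  have hS0 : (0:ℝ) ∈ S := ⟨⟨le_rfl, ht10⟩, hg0⟩
  set σ := sSup S with hσ
  have hσS : σ ∈ S := hScp.sSup_mem ⟨0, hS0⟩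
  have hσT : σ ∈ Set.Icc 0 T := hsub1 hσS.1
  have hgσ : 2 * eps ≤ g σ := hσS.2
  have hσt1 : σ < t1 := lt_of_le_of_ne hσS.1.2 (fun he => by rw [he] at hgσ; linarith)
  have hbdd : BddAbove S := hScp.bddAbove
  have hless : ∀ w ∈ Set.Ioc σ t1, g w < 2 * eps := by
    intro w hw
    by_contra hge
    push_neg at hge
    have hwS : w ∈ S := ⟨⟨le_trans hσS.1.1 hw.1.le, hw.2⟩, hge⟩
    exact absurd (le_csSup hbdd hwS) (not_le.mpr hw.1)
  have hgσle : g σ ≤ 2 * eps := by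
    have hcw : ContinuousWithinAt g (Set.Ioc σ t1) σ :=
      (hgc σ hσT).mono (fun w hw => ⟨le_trans hσT.1 hw.1.le, le_trans hw.2 ht1.2⟩)
    have hne : (nhdsWithin σ (Set.Ioc σ t1)).NeBot := by
      rw [nhdsWithin_Ioc_eq_nhdsGT hσt1]
      exact nhdsGT_neBot σ
    exact le_of_tendsto hcw
      (Filter.eventually_of_mem self_mem_nhdsWithin (fun w hw => (hless w hw).le))
  have hall : ∀ w ∈ Set.Icc σ t1, g w ≤ 2 * eps := by
    intro w hw
    rcases eq_or_lt_of_le hw.1 with he | hl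
    · rw [← he]; exact hgσle
    · exact (hless w ⟨hl, hw.2⟩).le
  have hd := hdrift σ t1 hσT ht1 hσt1 hall
  have hn := hnum (t1 - σ) (by linarith)
  linarith


set_option maxHeartbeats 1000000 in
theorem stmt_7
    (T lam : ℝ) (hT : 0 < T) (hlam : lam ∈ Set.Ioo (0:ℝ) 1)
    (phi psi : ℝ → ℝ) (K : ℝ) (hK : 0 < K)
    (hphiH : ∀ s ∈ Set.Icc (0:ℝ) T, ∀ t ∈ Set.Icc (0:ℝ) T, |phi t - phi s| ≤ K * |t - s| ^ lam)
    (hpsiH : ∀ s ∈ Set.Icc (0:ℝ) T, ∀ t ∈ Set.Icc (0:ℝ) T, |psi t - psi s| ≤ K * |t - s| ^ lam)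
    (hphipsi : ∀ t ∈ Set.Icc (0:ℝ) T, phi t < psi t)
    (b : ℝ → ℝ → ℝ) (c1 p c2 ystar gam : ℝ)
    (hc1 : 0 < c1) (hp : 1 < p) (hc2 : 0 < c2) (hystar : 0 < ystar)
    (hgam : 1 / lam - 1 < gam)
    (hB2cont : ContinuousOn (fun q : ℝ × ℝ => b q.1 q.2)
      {q : ℝ × ℝ | q.1 ∈ Set.Icc (0:ℝ) T ∧ phi q.1 < q.2 ∧ q.2 < psi q.1})
    (hB2lip : ∀ ε : ℝ, 0 < ε → ε < min 1 ((⨆ t : Set.Icc (0:ℝ) T, |psi t.1 - phi t.1|) / 2) →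
      ∀ t1 ∈ Set.Icc (0:ℝ) T, ∀ t2 ∈ Set.Icc (0:ℝ) T, ∀ y1 y2 : ℝ,
        phi t1 + ε < y1 → y1 < psi t1 - ε → phi t2 + ε < y2 → y2 < psi t2 - ε →
        |b t1 y1 - b t2 y2| ≤ c1 / ε ^ p * (|y1 - y2| + |t1 - t2| ^ lam))
    (hB3low : ∀ t ∈ Set.Icc (0:ℝ) T, ∀ y : ℝ, phi t < y → y ≤ phi t + ystar → y < psi t →
      c2 / (y - phi t) ^ gam ≤ b t y)
    (hB3up : ∀ t ∈ Set.Icc (0:ℝ) T, ∀ y : ℝ, psi t - ystar ≤ y → y < psi t → phi t < y →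
      b t y ≤ -(c2 / (psi t - y) ^ gam))
    (Y0 : ℝ) (hB1 : phi 0 < Y0 ∧ Y0 < psi 0)
    :
    ∃ C : ℝ, 0 < C ∧
      ∀ (Z : ℝ → ℝ) (Lam : ℝ), 0 < Lam → Z 0 = 0 →
        (∀ s ∈ Set.Icc (0:ℝ) T, ∀ t ∈ Set.Icc (0:ℝ) T, |Z t - Z s| ≤ Lam * |t - s| ^ lam) →
        ∀ Y : ℝ → ℝ, ContinuousOn Y (Set.Icc (0:ℝ) T) →
          (∀ t ∈ Set.Icc (0:ℝ) T, phi t < Y t ∧ Y t < psi t) →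
          (∀ t ∈ Set.Icc (0:ℝ) T, Y t = Y0 + (∫ s in (0:ℝ)..t, b s (Y s)) + Z t) →
          ∀ s ∈ Set.Icc (0:ℝ) T, ∀ t ∈ Set.Icc (0:ℝ) T,
            |Y t - Y s| ≤
              C * (1 + Lam ^ (max p (gam * lam + lam - 1) / (gam * lam + lam - 1)))
                * |t - s| ^ lam := by
  obtain ⟨hlam0, hlam1⟩ := hlam
  obtain ⟨hY0l, hY0r⟩ := hB1
  have h0T : (0:ℝ) ∈ Set.Icc (0:ℝ) T := ⟨le_rfl, hT.le⟩
  have hgam0 : 0 < gam := by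
    have h1 : (1:ℝ) < 1 / lam := (one_lt_one_div hlam0 hlam1)
    linarith
  set alp := gam * lam + lam - 1 with halp
  have halp0 : 0 < alp := by
    have h1 : (1 / lam - 1) * lam < gam * lam := mul_lt_mul_of_pos_right hgam hlam0
    have h2 : (1 / lam - 1) * lam = 1 - lam := by field_simp
    rw [halp]; linarith
  set Qm := max p alp / alp with hQmdef
  have hQm1 : 1 ≤ Qm := (one_le_div halp0).mpr (le_max_right _ _)
  have hQmq : p / alp ≤ Qm := by
    rw [hQmdef]; gcongr; exact le_max_left _ _
  have hpalp0 : (0:ℝ) ≤ p / alp := by positivity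
  have hcont_phi := holder_contOn T K lam hK hlam0 phi hphiH
  have hcont_psi := holder_contOn T K lam hK hlam0 psi hpsiH
  set cE := (c2 * 2 ^ (-gam)) ^ (lam / alp) with hcEdef
  have hcE0 : 0 < cE := Real.rpow_pos_of_pos (by positivity) _
  set e0 := min (min ((1:ℝ)/2) (ystar/2)) (min ((Y0 - phi 0)/2) ((psi 0 - Y0)/2)) with he0def
  have he00 : 0 < e0 := by
    apply lt_min (lt_min (by norm_num) (by linarith)) (lt_min (by linarith) (by linarith))
  have he0h : e0 ≤ 1/2 := le_trans (min_le_left _ _) (min_le_left _ _)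
  have he0y : e0 ≤ ystar/2 := le_trans (min_le_left _ _) (min_le_right _ _)
  have he0a : e0 ≤ (Y0 - phi 0)/2 := le_trans (min_le_right _ _) (min_le_left _ _)
  have he0b : e0 ≤ (psi 0 - Y0)/2 := le_trans (min_le_right _ _) (min_le_right _ _)
  set M1 := |phi 0| + |psi 0| + K * T ^ lam with hM1def
  have hM10 : 0 ≤ M1 := by positivity
  set D := 2 * M1 + T ^ lam with hDdef
  have hD0 : 0 < D := by positivity
  set Bb := |b 0 Y0| with hBbdef
  have hBb0 : 0 ≤ Bb := abs_nonneg _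
  set CA := Bb + c1 * D * (e0/2) ^ (-p) with hCAdef
  have hCA0 : 0 < CA := by positivity
  set CB := c1 * D * 2 ^ p * cE ^ (-p) * (K+1) ^ Qm * 2 ^ Qm with hCBdef
  have hCB0 : 0 < CB := by positivity
  have hT1l : (0:ℝ) < T ^ (1 - lam) := Real.rpow_pos_of_pos hT _
  -- the supremum bound
  have hsupb : psi 0 - phi 0 ≤ ⨆ t : Set.Icc (0:ℝ) T, |psi t.1 - phi t.1| := by
    have hb : BddAbove (Set.range fun t : Set.Icc (0:ℝ) T => |psi t.1 - phi t.1|) := by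
      refine ⟨2 * (K * T ^ lam) + |psi 0 - phi 0|, ?_⟩
      rintro x ⟨t, rfl⟩
      have h1 := hpsiH 0 h0T t.1 t.2
      have h2 := hphiH 0 h0T t.1 t.2
      have h3 : |t.1 - 0| ^ lam ≤ T ^ lam := by
        apply Real.rpow_le_rpow (abs_nonneg _) _ hlam0.le
        rw [sub_zero, abs_of_nonneg t.2.1]; exact t.2.2
      have h4 : K * |t.1 - 0| ^ lam ≤ K * T ^ lam := by gcongr
      have e1 : psi t.1 - phi t.1 = (psi t.1 - psi 0) + (psi 0 - phi 0) + -(phi t.1 - phi 0) := by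
        ring
      calc |psi t.1 - phi t.1|
          ≤ |psi t.1 - psi 0| + |psi 0 - phi 0| + |phi t.1 - phi 0| := by
            rw [e1]
            refine (abs_add_le _ _).trans ?_
            have h5 := abs_add_le (psi t.1 - psi 0) (psi 0 - phi 0)
            rw [abs_neg]
            linarith
        _ ≤ 2 * (K * T ^ lam) + |psi 0 - phi 0| := by linarith
    have h5 := le_ciSup hb (⟨0, h0T⟩ : Set.Icc (0:ℝ) T)
    have h6 : |psi 0 - phi 0| = psi 0 - phi 0 := abs_of_pos (by linarith [hphipsi 0 h0T])
    simpa [h6] using h5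
  refine ⟨(CA + CB) * T ^ (1 - lam) + 1, by positivity, ?_⟩
  intro Z Lam hLam hZ0 hZH Y hYc hYin hYeq
  set M := K + Lam with hMdef
  have hM0 : 0 < M := by positivity
  set epsL := cE * M ^ (-(1/alp)) with hepsLdef
  have hepsL0 : 0 < epsL := mul_pos hcE0 (Real.rpow_pos_of_pos hM0 _)
  set eps := min epsL e0 with hepsdef
  have heps0 : 0 < eps := lt_min hepsL0 he00
  have hepse0 : eps ≤ e0 := min_le_right _ _
  have hepsys : 2 * eps ≤ ystar := by
    have h := hepse0.trans he0y; linarith only [h]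
  have hbY : ContinuousOn (fun u => b u (Y u)) (Set.Icc 0 T) := by
    have hc : ContinuousOn (fun u => ((u, Y u) : ℝ × ℝ)) (Set.Icc 0 T) :=
      (continuousOn_id).prodMk hYc
    exact hB2cont.comp hc (fun u hu => ⟨hu, hYin u hu⟩)
  have hY00 : Y 0 = Y0 := by
    have h := hYeq 0 h0T
    simpa [intervalIntegral.integral_same, hZ0] using h
  have hintegr : ∀ u ∈ Set.Icc (0:ℝ) T, ∀ v ∈ Set.Icc (0:ℝ) T, u ≤ v →
      IntervalIntegrable (fun w => b w (Y w)) volume u v := by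
    intro u hu v hv huv
    apply (hbY.mono ?_).intervalIntegrable
    rw [Set.uIcc_of_le huv]
    exact Set.Icc_subset_Icc hu.1 hv.2
  have hYdiff : ∀ u ∈ Set.Icc (0:ℝ) T, ∀ v ∈ Set.Icc (0:ℝ) T, u ≤ v →
      Y v - Y u = (∫ w in u..v, b w (Y w)) + (Z v - Z u) := by
    intro u hu v hv huv
    have h1 := hYeq u hu
    have h2 := hYeq v hv
    have h3 := intervalIntegral.integral_add_adjacent_intervals
      (hintegr 0 h0T u hu hu.1) (hintegr u hu v hv huv)
    rw [h1, h2]; linarith only [h3]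
  have hBpos : 0 < c2 / (2 * eps) ^ gam := by positivity
  have hnumM : ∀ h : ℝ, 0 < h → -eps ≤ c2 / (2 * eps) ^ gam * h - M * h ^ lam := by
    apply aux_num lam alp c2 gam M eps hlam0 hlam1 hc2 hgam0 hM0 heps0 halp halp0
    exact min_le_left _ _
  -- lower barrier
  have hdriftlow : ∀ u v : ℝ, u ∈ Set.Icc (0:ℝ) T → v ∈ Set.Icc (0:ℝ) T → u < v →
      (∀ w ∈ Set.Icc u v, Y w - phi w ≤ 2 * eps) →
      c2 / (2 * eps) ^ gam * (v - u) - M * (v - u) ^ lam ≤ (Y v - phi v) - (Y u - phi u) := by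
    intro u v hu hv huv hsmall
    have hint : c2 / (2 * eps) ^ gam * (v - u) ≤ ∫ w in u..v, b w (Y w) := by
      have hmono := intervalIntegral.integral_mono_on huv.le
        (intervalIntegrable_const (c := c2 / (2 * eps) ^ gam))
        (hintegr u hu v hv huv.le) ?_
      · rw [intervalIntegral.integral_const, smul_eq_mul] at hmono
        linarith only [hmono]
      · intro w hw
        have hwT : w ∈ Set.Icc (0:ℝ) T := ⟨le_trans hu.1 hw.1, le_trans hw.2 hv.2⟩
        have h1 : phi w < Y w := (hYin w hwT).1
        have hsw := hsmall w hw
        have h2 : Y w ≤ phi w + ystar := by linarith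
        have h3 := hB3low w hwT (Y w) h1 h2 (hYin w hwT).2
        have h4 : (Y w - phi w) ^ gam ≤ (2 * eps) ^ gam :=
          Real.rpow_le_rpow (by linarith) (by linarith) hgam0.le
        have h5 : (0:ℝ) < (Y w - phi w) ^ gam := Real.rpow_pos_of_pos (by linarith) _
        calc c2 / (2 * eps) ^ gam ≤ c2 / (Y w - phi w) ^ gam := by gcongr
          _ ≤ b w (Y w) := h3
    have hZb := abs_le.mp (hZH u hu v hv)
    have hphib := abs_le.mp (hphiH u hu v hv)
    have hvu : |v - u| = v - u := abs_of_pos (by linarith)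
    rw [hvu] at hZb hphib
    have hYd := hYdiff u hu v hv huv.le
    have hMeq : M * (v - u) ^ lam = K * (v - u) ^ lam + Lam * (v - u) ^ lam := by
      rw [hMdef]; ring
    linarith only [hZb.1, hphib.2, hYd, hint, hMeq]
  have hlow : ∀ u ∈ Set.Icc (0:ℝ) T, eps ≤ Y u - phi u := by
    apply aux_barrier T lam eps M (c2 / (2 * eps) ^ gam) _ heps0 hT.le
    · rw [hY00]; linarith [hepse0.trans he0a]
    · exact hYc.sub hcont_phi
    · exact hdriftlow
    · exact hnumM
  -- upper barrier
  have hdriftup : ∀ u v : ℝ, u ∈ Set.Icc (0:ℝ) T → v ∈ Set.Icc (0:ℝ) T → u < v →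
      (∀ w ∈ Set.Icc u v, psi w - Y w ≤ 2 * eps) →
      c2 / (2 * eps) ^ gam * (v - u) - M * (v - u) ^ lam ≤ (psi v - Y v) - (psi u - Y u) := by
    intro u v hu hv huv hsmall
    have hint : (∫ w in u..v, b w (Y w)) ≤ -(c2 / (2 * eps) ^ gam) * (v - u) := by
      have hmono := intervalIntegral.integral_mono_on huv.le
        (hintegr u hu v hv huv.le)
        (intervalIntegrable_const (c := -(c2 / (2 * eps) ^ gam))) ?_
      · rw [intervalIntegral.integral_const, smul_eq_mul] at hmono
        linarith only [hmono]
      · intro w hw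
        have hwT : w ∈ Set.Icc (0:ℝ) T := ⟨le_trans hu.1 hw.1, le_trans hw.2 hv.2⟩
        have h1 : Y w < psi w := (hYin w hwT).2
        have hsw := hsmall w hw
        have h2 : psi w - ystar ≤ Y w := by linarith
        have h3 := hB3up w hwT (Y w) h2 h1 (hYin w hwT).1
        have h4 : (psi w - Y w) ^ gam ≤ (2 * eps) ^ gam :=
          Real.rpow_le_rpow (by linarith) (by linarith) hgam0.le
        have h5 : (0:ℝ) < (psi w - Y w) ^ gam := Real.rpow_pos_of_pos (by linarith) _
        have h6 : c2 / (2 * eps) ^ gam ≤ c2 / (psi w - Y w) ^ gam := by gcongr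
        linarith
    have hZb := abs_le.mp (hZH u hu v hv)
    have hpsib := abs_le.mp (hpsiH u hu v hv)
    have hvu : |v - u| = v - u := abs_of_pos (by linarith)
    rw [hvu] at hZb hpsib
    have hYd := hYdiff u hu v hv huv.le
    have hMeq : M * (v - u) ^ lam = K * (v - u) ^ lam + Lam * (v - u) ^ lam := by
      rw [hMdef]; ring
    linarith only [hZb.2, hpsib.1, hYd, hint, hMeq]
  have hup : ∀ u ∈ Set.Icc (0:ℝ) T, eps ≤ psi u - Y u := by
    apply aux_barrier T lam eps M (c2 / (2 * eps) ^ gam) _ heps0 hT.le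
    · rw [hY00]; linarith [hepse0.trans he0b]
    · exact hcont_psi.sub hYc
    · exact hdriftup
    · exact hnumM
  -- eps/2 admissible for hB2lip
  have hepslt : eps/2 < min 1 ((⨆ t : Set.Icc (0:ℝ) T, |psi t.1 - phi t.1|) / 2) := by
    apply lt_min
    · have h := hepse0.trans he0h; linarith only [h, heps0]
    · have h1 : eps ≤ (Y0 - phi 0)/2 := hepse0.trans he0a
      linarith only [h1, hsupb, hY0r, heps0]
  -- bound on |Y|
  have hYbound : ∀ u ∈ Set.Icc (0:ℝ) T, |Y u| ≤ M1 := by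
    intro u hu
    have h1 := (hYin u hu).1
    have h2 := (hYin u hu).2
    have hTl : |u - 0| ^ lam ≤ T ^ lam := by
      apply Real.rpow_le_rpow (abs_nonneg _) _ hlam0.le
      rw [sub_zero, abs_of_nonneg hu.1]; exact hu.2
    have h3 := abs_le.mp (hphiH 0 h0T u hu)
    have h4 := abs_le.mp (hpsiH 0 h0T u hu)
    have h5 : K * |u - 0| ^ lam ≤ K * T ^ lam := by gcongr
    have hKT : (0:ℝ) ≤ K * T ^ lam := by positivity
    rw [abs_le]
    constructor
    · have h6 := neg_abs_le (phi 0)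
      have h7 := abs_nonneg (psi 0)
      rw [hM1def]; linarith only [h3.1, h5, h1, h6, h7, hKT]
    · have h6 := le_abs_self (psi 0)
      have h7 := abs_nonneg (phi 0)
      rw [hM1def]; linarith only [h4.2, h5, h2, h6, h7, hKT]
  have hLQ0 : (0:ℝ) ≤ Lam ^ Qm := Real.rpow_nonneg hLam.le _
  -- bound on b along the solution
  have hbbound : ∀ u ∈ Set.Icc (0:ℝ) T, |b u (Y u)| ≤ CA + CB * (1 + Lam ^ Qm) := by
    intro u hu
    have hmem1 : phi u + eps/2 < Y u := by
      have h := hlow u hu; linarith only [h, heps0]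
    have hmem2 : Y u < psi u - eps/2 := by
      have h := hup u hu; linarith only [h, heps0]
    have hmem3 : phi 0 + eps/2 < Y 0 := by
      rw [hY00]; have h := hepse0.trans he0a; linarith only [h, heps0, hY0l]
    have hmem4 : Y 0 < psi 0 - eps/2 := by
      rw [hY00]; have h := hepse0.trans he0b; linarith only [h, heps0, hY0r]
    have hlip := hB2lip (eps/2) (by positivity) hepslt u hu 0 h0T (Y u) (Y 0)
      hmem1 hmem2 hmem3 hmem4
    have hTl : |u - 0| ^ lam ≤ T ^ lam := by
      apply Real.rpow_le_rpow (abs_nonneg _) _ hlam0.le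
      rw [sub_zero, abs_of_nonneg hu.1]; exact hu.2
    have habsYY : |Y u - Y 0| ≤ 2 * M1 := by
      have h1 := hYbound u hu
      have h2 := hYbound 0 h0T
      have h3 : |Y u - Y 0| ≤ |Y u| + |Y 0| := abs_sub _ _
      linarith only [h1, h2, h3]
    have hYub : |Y u - Y 0| + |u - 0| ^ lam ≤ D := by
      rw [hDdef]; linarith only [habsYY, hTl]
    have hlip2 : |b u (Y u) - b 0 (Y 0)| ≤ c1 / (eps/2) ^ p * D := by
      refine hlip.trans ?_
      gcongr
    have h7 : |b 0 (Y 0)| = Bb := by rw [hY00]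
    have hb0 : |b u (Y u)| ≤ Bb + c1 / (eps/2) ^ p * D := by
      have he : b u (Y u) = (b u (Y u) - b 0 (Y 0)) + b 0 (Y 0) := by ring
      calc |b u (Y u)| ≤ |b u (Y u) - b 0 (Y 0)| + |b 0 (Y 0)| := by
            simpa using abs_add_le (b u (Y u) - b 0 (Y 0)) (b 0 (Y 0))
        _ ≤ Bb + c1 / (eps/2) ^ p * D := by rw [h7]; linarith only [hlip2]
    have hsplit : c1 / (eps/2) ^ p * D ≤ c1 * D * (e0/2) ^ (-p) + c1 * D * (epsL/2) ^ (-p) := by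
      have heq : ∀ x : ℝ, 0 < x → c1 / (x/2) ^ p * D = c1 * D * (x/2) ^ (-p) := by
        intro x hx
        rw [Real.rpow_neg (by positivity)]
        field_simp
      have hpos1 : (0:ℝ) ≤ c1 * D * (e0/2) ^ (-p) := by positivity
      have hpos2 : (0:ℝ) ≤ c1 * D * (epsL/2) ^ (-p) := by positivity
      rcases min_cases epsL e0 with ⟨hmin, _⟩ | ⟨hmin, _⟩
      · rw [hepsdef, hmin, heq epsL hepsL0]; linarith only [hpos1]
      · rw [hepsdef, hmin, heq e0 he00]; linarith only [hpos2]
    have e1 : (epsL/2) ^ (-p) = 2 ^ p * (cE ^ (-p) * M ^ (p/alp)) := by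
      have e0' : (M ^ (-(1/alp))) ^ (-p) = M ^ (p/alp) := by
        rw [← Real.rpow_mul hM0.le]
        congr 1
        ring
      rw [hepsLdef, Real.div_rpow (by positivity) (by norm_num),
          Real.mul_rpow hcE0.le (Real.rpow_nonneg hM0.le _), e0',
          Real.rpow_neg (by norm_num : (0:ℝ) ≤ 2), div_eq_mul_inv, inv_inv]
      ring
    have hMle : M ≤ (K+1) * (1+Lam) := by
      have h := mul_pos hK hLam
      calc M = K + Lam := hMdef
        _ ≤ K + Lam + (1 + K * Lam) := by linarith only [h]
        _ = (K+1) * (1+Lam) := by ring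
    have hstep5 : (1 + Lam) ^ Qm ≤ 2 ^ Qm * (1 + Lam ^ Qm) := by
      have h2Q : (0:ℝ) < 2 ^ Qm := Real.rpow_pos_of_pos (by norm_num) _
      rcases le_total Lam 1 with hL | hL
      · calc (1+Lam) ^ Qm ≤ (2:ℝ) ^ Qm :=
              Real.rpow_le_rpow (by linarith) (by linarith) (by linarith)
          _ ≤ 2 ^ Qm * (1 + Lam ^ Qm) :=
              le_mul_of_one_le_right h2Q.le (by linarith only [hLQ0])
      · calc (1+Lam) ^ Qm ≤ (2*Lam) ^ Qm :=
              Real.rpow_le_rpow (by linarith) (by linarith) (by linarith)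
          _ = 2 ^ Qm * Lam ^ Qm := Real.mul_rpow (by norm_num) hLam.le
          _ ≤ 2 ^ Qm * (1 + Lam ^ Qm) :=
              mul_le_mul_of_nonneg_left (by linarith only [] : Lam ^ Qm ≤ 1 + Lam ^ Qm) h2Q.le
    have hL1 : M ^ (p/alp) ≤ (K+1) ^ Qm * (2 ^ Qm * (1 + Lam ^ Qm)) := by
      calc M ^ (p/alp) ≤ ((K+1)*(1+Lam)) ^ (p/alp) :=
            Real.rpow_le_rpow hM0.le hMle hpalp0
        _ = (K+1) ^ (p/alp) * (1+Lam) ^ (p/alp) :=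
            Real.mul_rpow (by linarith) (by linarith)
        _ ≤ (K+1) ^ Qm * (1+Lam) ^ Qm :=
            mul_le_mul (Real.rpow_le_rpow_of_exponent_le (by linarith) hQmq)
              (Real.rpow_le_rpow_of_exponent_le (by linarith) hQmq)
              (Real.rpow_nonneg (by linarith) _) (Real.rpow_nonneg (by linarith) _)
        _ ≤ (K+1) ^ Qm * (2 ^ Qm * (1 + Lam ^ Qm)) :=
            mul_le_mul_of_nonneg_left hstep5 (Real.rpow_nonneg (by linarith) _)
    have hepsLs : c1 * D * (epsL/2) ^ (-p) ≤ CB * (1 + Lam ^ Qm) := by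
      rw [e1, hCBdef]
      calc c1 * D * (2 ^ p * (cE ^ (-p) * M ^ (p/alp)))
          = c1 * D * 2 ^ p * cE ^ (-p) * M ^ (p/alp) := by ring
        _ ≤ c1 * D * 2 ^ p * cE ^ (-p) * ((K+1) ^ Qm * (2 ^ Qm * (1 + Lam ^ Qm))) :=
            mul_le_mul_of_nonneg_left hL1 (by positivity)
        _ = c1 * D * 2 ^ p * cE ^ (-p) * (K+1) ^ Qm * 2 ^ Qm * (1 + Lam ^ Qm) := by ring
    calc |b u (Y u)| ≤ Bb + c1 / (eps/2) ^ p * D := hb0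
      _ ≤ Bb + (c1 * D * (e0/2) ^ (-p) + c1 * D * (epsL/2) ^ (-p)) := by
          linarith only [hsplit]
      _ ≤ CA + CB * (1 + Lam ^ Qm) := by rw [hCAdef]; linarith only [hepsLs]
  have hLam1 : Lam ≤ 1 + Lam ^ Qm := by
    rcases le_total Lam 1 with hL | hL
    · linarith only [hL, hLQ0]
    · have h2 : Lam ^ (1:ℝ) ≤ Lam ^ Qm := Real.rpow_le_rpow_of_exponent_le hL hQm1
      rw [Real.rpow_one] at h2; linarith only [h2]
  have key : ∀ u v : ℝ, u ∈ Set.Icc (0:ℝ) T → v ∈ Set.Icc (0:ℝ) T → u ≤ v →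
      |Y v - Y u| ≤ ((CA + CB) * T ^ (1 - lam) + 1) * (1 + Lam ^ Qm) * |v - u| ^ lam := by
    intro u v hu hv huv
    rcases eq_or_lt_of_le huv with rfl | hvu
    · simp only [sub_self, abs_zero]
      rw [Real.zero_rpow hlam0.ne', mul_zero]
    · have hYd := hYdiff u hu v hv huv
      have hintb : |∫ w in u..v, b w (Y w)| ≤ (CA + CB * (1 + Lam ^ Qm)) * |v - u| := by
        have h := intervalIntegral.norm_integral_le_of_norm_le_const
          (C := CA + CB * (1 + Lam ^ Qm)) (f := fun w => b w (Y w)) (a := u) (b := v) ?_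
        · simpa [Real.norm_eq_abs, abs_sub_comm v u] using h
        · intro w hw
          rw [Set.uIoc_of_le huv] at hw
          have hwT : w ∈ Set.Icc (0:ℝ) T := ⟨le_trans hu.1 hw.1.le, le_trans hw.2 hv.2⟩
          simpa [Real.norm_eq_abs] using hbbound w hwT
      have hZb := hZH u hu v hv
      have habs0 : (0:ℝ) < |v - u| := by
        rw [abs_of_pos (by linarith : (0:ℝ) < v - u)]; linarith
      have hTabs : |v - u| ≤ T := by
        rw [abs_of_pos (by linarith : (0:ℝ) < v - u)]; linarith [hu.1, hv.2]
      have h1 : |v - u| ≤ T ^ (1 - lam) * |v - u| ^ lam := by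
        have e1 : |v - u| = |v - u| ^ (1 - lam) * |v - u| ^ lam := by
          rw [← Real.rpow_add habs0, show (1 - lam) + lam = 1 by ring, Real.rpow_one]
        calc |v - u| = |v - u| ^ (1 - lam) * |v - u| ^ lam := e1
          _ ≤ T ^ (1 - lam) * |v - u| ^ lam :=
            mul_le_mul_of_nonneg_right
              (Real.rpow_le_rpow (abs_nonneg _) hTabs (by linarith : (0:ℝ) ≤ 1 - lam))
              (Real.rpow_nonneg (abs_nonneg _) _)
      have habs : |Y v - Y u| ≤ (CA + CB * (1 + Lam ^ Qm)) * |v - u| + Lam * |v - u| ^ lam := by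
        rw [hYd]
        refine (abs_add_le _ _).trans ?_
        linarith only [hintb, hZb]
      set x := |v - u| ^ lam with hx
      have hx0 : (0:ℝ) ≤ x := Real.rpow_nonneg (abs_nonneg _) _
      have h2 : (CA + CB * (1 + Lam ^ Qm)) * |v - u|
          ≤ (CA + CB * (1 + Lam ^ Qm)) * (T ^ (1-lam) * x) :=
        mul_le_mul_of_nonneg_left h1 (by positivity)
      have h3 : Lam * x ≤ (1 + Lam ^ Qm) * x := mul_le_mul_of_nonneg_right hLam1 hx0
      have h4 : (CA + CB * (1 + Lam ^ Qm)) * (T ^ (1-lam) * x)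
          ≤ (CA + CB) * (1 + Lam ^ Qm) * T ^ (1-lam) * x := by
        have hdiff : (CA + CB) * (1 + Lam ^ Qm) * T ^ (1-lam) * x
            - (CA + CB * (1 + Lam ^ Qm)) * (T ^ (1-lam) * x)
            = CA * Lam ^ Qm * (T ^ (1-lam) * x) := by ring
        have hnn : 0 ≤ CA * Lam ^ Qm * (T ^ (1-lam) * x) := by positivity
        linarith only [hdiff, hnn]
      have h5 : ((CA + CB) * T ^ (1 - lam) + 1) * (1 + Lam ^ Qm) * x
          = (CA + CB) * (1 + Lam ^ Qm) * T ^ (1-lam) * x + (1 + Lam ^ Qm) * x := by ring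
      linarith only [habs, h2, h3, h4, h5]
  intro s hs t ht
  rcases le_total s t with hst | hst
  · exact key s t hs ht hst
  · have h := key t s ht hs hst
    rw [abs_sub_comm (Y t) (Y s), abs_sub_comm t s]
    exact h
end

section
/- Under Assumptions (B1)–(B4), there exists a constant C > 0, depending only on Y(0), φ, ψ, the drift b (through c1, c2, p, y_*, γ), λ and T (in particular not on Z, Λ or N), such that for every noise path Z with Hölder constant Λ and every N with c3·Δ_N < 1, the drift-implicit Euler scheme satisfies |Ŷ(t_k) − Ŷ(t_n)| ≤ C·(1 + Λ^{max{p, γλ+λ−1}/(γλ+λ−1)})·|t_k − t_n|^λ for all k, n = 0, 1, …, N. -/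
open MeasureTheory


private lemma tele_sum (f : ℕ → ℝ) : ∀ j k : ℕ, j ≤ k →
    ∑ i ∈ Finset.Ico j k, (f (i+1) - f i) = f k - f j := by
  intro j k h
  induction k, h using Nat.le_induction with
  | base => simp
  | succ k hk ih => rw [Finset.sum_Ico_succ_top hk, ih]; ring

private lemma two_rpow_split {x y q : ℝ} (hx : 0 ≤ x) (hy : 0 ≤ y) (hq : 0 ≤ q) :
    (x + y) ^ q ≤ 2 ^ q * (x ^ q + y ^ q) := by
  have h1 : x + y ≤ 2 * max x y := by
    rcases le_total x y with h | h
    · rw [max_eq_right h]; linarith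
    · rw [max_eq_left h]; linarith
  have hmax : 0 ≤ max x y := le_max_of_le_left hx
  calc (x + y) ^ q ≤ (2 * max x y) ^ q := Real.rpow_le_rpow (by linarith) h1 hq
    _ = 2 ^ q * (max x y) ^ q := Real.mul_rpow (by norm_num) hmax
    _ ≤ 2 ^ q * (x ^ q + y ^ q) := by
        have h2 : (max x y) ^ q ≤ x ^ q + y ^ q := by
          rcases le_total x y with h | h
          · rw [max_eq_right h]
            have := Real.rpow_nonneg hx q
            linarith
          · rw [max_eq_left h]
            have := Real.rpow_nonneg hy q
            linarith
        have h3 : (0:ℝ) ≤ 2 ^ q := Real.rpow_nonneg (by norm_num) q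
        nlinarith
private lemma rpow_le_one_add {x s q : ℝ} (hx : 0 < x) (hs : 0 ≤ s) (hsq : s ≤ q) :
    x ^ s ≤ 1 + x ^ q := by
  rcases le_total x 1 with h | h
  · have := Real.rpow_le_one hx.le h hs
    have := Real.rpow_nonneg hx.le q
    linarith
  · have := Real.rpow_le_rpow_of_exponent_le h hsq
    linarith

private lemma aux_barrier_s8 (d : ℕ → ℝ) (N : ℕ) (ε : ℝ) (hε : 0 < ε) (h0 : 2*ε ≤ d 0)
    (hstep : ∀ j k : ℕ, j < k → k ≤ N → (∀ i, j < i → i ≤ k → d i < 2*ε) → d j - ε ≤ d k) :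
    ∀ k, k ≤ N → ε ≤ d k := by
  have key : ∀ k, k ≤ N → ∃ j, j ≤ k ∧ 2*ε ≤ d j ∧
      ∀ i, j < i → i ≤ k → ε ≤ d i ∧ d i < 2*ε := by
    intro k
    induction k with
    | zero =>
      intro _
      exact ⟨0, le_refl _, h0, fun i h1 h2 => absurd (h1.trans_le h2) (lt_irrefl 0)⟩
    | succ k ih =>
      intro hk
      obtain ⟨j, hj, hdj, hmid⟩ := ih (Nat.le_of_succ_le hk)
      by_cases hcase : 2*ε ≤ d (k+1)
      · exact ⟨k+1, le_refl _, hcase, fun i h1 h2 => absurd (h1.trans_le h2) (lt_irrefl _)⟩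
      · push_neg at hcase
        have hdk1 : ε ≤ d (k+1) := by
          have hs := hstep j (k+1) (Nat.lt_succ_of_le hj) hk (fun i h1 h2 => by
            rcases eq_or_lt_of_le h2 with rfl | h2'
            · exact hcase
            · exact (hmid i h1 (Nat.lt_succ_iff.mp h2')).2)
          linarith
        refine ⟨j, hj.trans (Nat.le_succ k), hdj, ?_⟩
        intro i h1 h2
        rcases eq_or_lt_of_le h2 with rfl | h2'
        · exact ⟨hdk1, hcase⟩
        · exact hmid i h1 (Nat.lt_succ_iff.mp h2')
  intro k hk
  obtain ⟨j, hj, hdj, hmid⟩ := key k hk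
  rcases eq_or_lt_of_le hj with rfl | hlt
  · linarith
  · exact (hmid k hlt (le_refl _)).1


private lemma star_lemma {lam gam c2 L ε : ℝ} (hlam0 : 0 < lam) (hlam1 : lam < 1)
    (hθ : 0 < gam * lam + lam - 1) (hc2 : 0 < c2) (hL : 0 < L) (hε : 0 < ε)
    (hεB : ε ≤ (c2 / 2 ^ gam) ^ (lam / (gam * lam + lam - 1)) *
      L ^ (-(1 / (gam * lam + lam - 1)))) :
    ∀ τ : ℝ, 0 < τ → L * τ ^ lam ≤ ε + c2 * τ / (2 * ε) ^ gam := by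
  intro τ hτ
  have h2e : (0:ℝ) < (2*ε) ^ gam := Real.rpow_pos_of_pos (by linarith) gam
  rcases le_or_gt (L * τ ^ lam) ε with h | h
  · have hpos : 0 ≤ c2 * τ / (2*ε) ^ gam := by positivity
    linarith
  · have hτl : (0:ℝ) < τ ^ lam := Real.rpow_pos_of_pos hτ lam
    have h1 : ε / L < τ ^ lam := by rw [div_lt_iff₀ hL]; linarith
    have h2 : (ε / L) ^ (1/lam) < τ := by
      calc (ε / L) ^ (1/lam) < (τ ^ lam) ^ (1/lam) :=
            Real.rpow_lt_rpow (by positivity) h1 (by positivity)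
        _ = τ := by
            rw [← Real.rpow_mul hτ.le]
            rw [mul_one_div, div_self (ne_of_gt hlam0), Real.rpow_one]
    have hτ1 : (ε / L) ^ ((1 - lam)/lam) ≤ τ ^ (1 - lam) := by
      calc (ε / L) ^ ((1 - lam)/lam) = ((ε / L) ^ (1/lam)) ^ (1 - lam) := by
            rw [← Real.rpow_mul (by positivity)]
            ring_nf
        _ ≤ τ ^ (1 - lam) :=
            Real.rpow_le_rpow (by positivity) h2.le (by linarith)
    -- the key algebraic inequality
    have key2 : L * (2*ε) ^ gam ≤ c2 * (ε / L) ^ ((1 - lam)/lam) := by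
      set θ := gam * lam + lam - 1 with hθdef
      have hεθ : ε ^ (θ/lam) ≤ (c2 / 2 ^ gam) * L ^ (-(1/lam)) := by
        have h3 : ε ^ (θ/lam) ≤ ((c2 / 2 ^ gam) ^ (lam/θ) * L ^ (-(1/θ))) ^ (θ/lam) :=
          Real.rpow_le_rpow hε.le hεB (by positivity)
        calc ε ^ (θ/lam) ≤ ((c2 / 2 ^ gam) ^ (lam/θ) * L ^ (-(1/θ))) ^ (θ/lam) := h3
          _ = ((c2 / 2 ^ gam) ^ (lam/θ)) ^ (θ/lam) * (L ^ (-(1/θ))) ^ (θ/lam) := by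
              apply Real.mul_rpow (by positivity) (by positivity)
          _ = (c2 / 2 ^ gam) * L ^ (-(1/lam)) := by
              rw [← Real.rpow_mul (by positivity), ← Real.rpow_mul hL.le]
              congr 1
              · rw [show lam/θ * (θ/lam) = 1 by field_simp, Real.rpow_one]
              · congr 1
                field_simp
      have h2g : (0:ℝ) < (2:ℝ) ^ gam := Real.rpow_pos_of_pos (by norm_num) gam
      have hsplit : (2*ε) ^ gam = 2 ^ gam * ε ^ gam :=
        Real.mul_rpow (by norm_num) hε.le
      have hdiv : (ε / L) ^ ((1-lam)/lam) = ε ^ ((1-lam)/lam) / L ^ ((1-lam)/lam) :=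
        Real.div_rpow hε.le hL.le _
      have hεgam : ε ^ gam = ε ^ (θ/lam) * ε ^ ((1-lam)/lam) := by
        rw [← Real.rpow_add hε]
        congr 1
        field_simp
        ring
      have hLsplit : L * L ^ ((1-lam)/lam) = L ^ (1/lam) := by
        nth_rewrite 1 [← Real.rpow_one L]
        rw [← Real.rpow_add hL]
        congr 1
        field_simp
        ring
      have hLneg : L ^ (-(1/lam)) * L ^ (1/lam) = 1 := by
        rw [← Real.rpow_add hL]
        simp
      have hεr : (0:ℝ) < ε ^ ((1-lam)/lam) := Real.rpow_pos_of_pos hε _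
      have hLr : (0:ℝ) < L ^ ((1-lam)/lam) := Real.rpow_pos_of_pos hL _
      have hmain : 2 ^ gam * ε ^ (θ/lam) * L ^ (1/lam) ≤ c2 := by
        have h4 : 2 ^ gam * ε ^ (θ/lam) * L ^ (1/lam) ≤
            2 ^ gam * ((c2 / 2 ^ gam) * L ^ (-(1/lam))) * L ^ (1/lam) := by
          have hL1 : (0:ℝ) < L ^ (1/lam) := Real.rpow_pos_of_pos hL _
          have := mul_le_mul_of_nonneg_left hεθ (le_of_lt h2g)
          nlinarith
        calc 2 ^ gam * ε ^ (θ/lam) * L ^ (1/lam) ≤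
            2 ^ gam * ((c2 / 2 ^ gam) * L ^ (-(1/lam))) * L ^ (1/lam) := h4
          _ = c2 * (L ^ (-(1/lam)) * L ^ (1/lam)) := by field_simp
          _ = c2 := by rw [hLneg, mul_one]
      rw [hsplit, hεgam, hdiv, ← mul_div_assoc, le_div_iff₀ hLr]
      calc L * (2 ^ gam * (ε ^ (θ/lam) * ε ^ ((1-lam)/lam))) * L ^ ((1-lam)/lam)
          = (2 ^ gam * ε ^ (θ/lam) * (L * L ^ ((1-lam)/lam))) * ε ^ ((1-lam)/lam) := by ring
        _ = (2 ^ gam * ε ^ (θ/lam) * L ^ (1/lam)) * ε ^ ((1-lam)/lam) := by rw [hLsplit]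
        _ ≤ c2 * ε ^ ((1-lam)/lam) := mul_le_mul_of_nonneg_right hmain hεr.le
    calc L * τ ^ lam = L * (2*ε)^gam * τ ^ lam / (2*ε)^gam := by field_simp
      _ ≤ c2 * (ε / L) ^ ((1-lam)/lam) * τ ^ lam / (2*ε)^gam := by gcongr
      _ ≤ c2 * τ ^ (1-lam) * τ ^ lam / (2*ε)^gam := by gcongr
      _ = c2 * τ / (2*ε)^gam := by
          rw [mul_assoc, ← Real.rpow_add hτ]
          norm_num
      _ ≤ ε + c2 * τ / (2*ε)^gam := by linarith

set_option maxHeartbeats 3000000 in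
theorem stmt_8
    (T lam : ℝ) (hT : 0 < T) (hlam : lam ∈ Set.Ioo (0:ℝ) 1)
    (phi psi : ℝ → ℝ) (K : ℝ) (hK : 0 < K)
    (hphiH : ∀ s ∈ Set.Icc (0:ℝ) T, ∀ t ∈ Set.Icc (0:ℝ) T, |phi t - phi s| ≤ K * |t - s| ^ lam)
    (hpsiH : ∀ s ∈ Set.Icc (0:ℝ) T, ∀ t ∈ Set.Icc (0:ℝ) T, |psi t - psi s| ≤ K * |t - s| ^ lam)
    (hphipsi : ∀ t ∈ Set.Icc (0:ℝ) T, phi t < psi t)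
    (b : ℝ → ℝ → ℝ) (c1 p c2 ystar gam : ℝ)
    (hc1 : 0 < c1) (hp : 1 < p) (hc2 : 0 < c2) (hystar : 0 < ystar)
    (hgam : 1 / lam - 1 < gam)
    (hB2cont : ContinuousOn (fun q : ℝ × ℝ => b q.1 q.2)
      {q : ℝ × ℝ | q.1 ∈ Set.Icc (0:ℝ) T ∧ phi q.1 < q.2 ∧ q.2 < psi q.1})
    (hB2lip : ∀ ε : ℝ, 0 < ε → ε < min 1 ((⨆ t : Set.Icc (0:ℝ) T, |psi t.1 - phi t.1|) / 2) →
      ∀ t1 ∈ Set.Icc (0:ℝ) T, ∀ t2 ∈ Set.Icc (0:ℝ) T, ∀ y1 y2 : ℝ,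
        phi t1 + ε < y1 → y1 < psi t1 - ε → phi t2 + ε < y2 → y2 < psi t2 - ε →
        |b t1 y1 - b t2 y2| ≤ c1 / ε ^ p * (|y1 - y2| + |t1 - t2| ^ lam))
    (hB3low : ∀ t ∈ Set.Icc (0:ℝ) T, ∀ y : ℝ, phi t < y → y ≤ phi t + ystar → y < psi t →
      c2 / (y - phi t) ^ gam ≤ b t y)
    (hB3up : ∀ t ∈ Set.Icc (0:ℝ) T, ∀ y : ℝ, psi t - ystar ≤ y → y < psi t → phi t < y →
      b t y ≤ -(c2 / (psi t - y) ^ gam))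
    (Y0 : ℝ) (hB1 : phi 0 < Y0 ∧ Y0 < psi 0)
    (bp : ℝ → ℝ → ℝ) (c3 : ℝ) (hc3 : 0 < c3)
    (hB4deriv : ∀ t ∈ Set.Icc (0:ℝ) T, ∀ y : ℝ, phi t < y → y < psi t →
      HasDerivAt (fun x => b t x) (bp t y) y)
    (hB4cont : ContinuousOn (fun q : ℝ × ℝ => bp q.1 q.2)
      {q : ℝ × ℝ | q.1 ∈ Set.Icc (0:ℝ) T ∧ phi q.1 < q.2 ∧ q.2 < psi q.1})
    (hB4lt : ∀ t ∈ Set.Icc (0:ℝ) T, ∀ y : ℝ, phi t < y → y < psi t → bp t y < c3)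
    :
    ∃ C : ℝ, 0 < C ∧
      ∀ (Z : ℝ → ℝ) (Lam : ℝ), 0 < Lam → Z 0 = 0 →
        (∀ s ∈ Set.Icc (0:ℝ) T, ∀ t ∈ Set.Icc (0:ℝ) T, |Z t - Z s| ≤ Lam * |t - s| ^ lam) →
        ∀ N : ℕ, 0 < N → c3 * (T / (N : ℝ)) < 1 →
        ∀ Yh : ℕ → ℝ, Yh 0 = Y0 →
          (∀ k : ℕ, k < N →
            phi (((k : ℝ) + 1) * T / (N : ℝ)) < Yh (k + 1) ∧
            Yh (k + 1) < psi (((k : ℝ) + 1) * T / (N : ℝ)) ∧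
            Yh (k + 1) = Yh k + b (((k : ℝ) + 1) * T / (N : ℝ)) (Yh (k + 1)) * (T / (N : ℝ))
              + (Z (((k : ℝ) + 1) * T / (N : ℝ)) - Z ((k : ℝ) * T / (N : ℝ)))) →
          ∀ k : ℕ, k ≤ N → ∀ n : ℕ, n ≤ N →
            |Yh k - Yh n| ≤
              C * (1 + Lam ^ (max p (gam * lam + lam - 1) / (gam * lam + lam - 1)))
                * |(k : ℝ) * T / (N : ℝ) - (n : ℝ) * T / (N : ℝ)| ^ lam := by
  obtain ⟨hlam0, hlam1⟩ := hlam
  obtain ⟨hY0l, hY0r⟩ := hB1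
  have hθ : 0 < gam * lam + lam - 1 := by
    have h1 : (1/lam - 1) * lam = 1 - lam := by field_simp
    nlinarith [mul_lt_mul_of_pos_right hgam hlam0]
  set θ := gam * lam + lam - 1 with hθdef
  have hgam0 : 0 < gam := by nlinarith
  set q := max p θ / θ with hqdef
  have hq1 : 1 ≤ q := by
    rw [hqdef, le_div_iff₀ hθ]
    simpa using le_max_right p θ
  have hp0 : 0 < p := by linarith
  have hpθq : p / θ ≤ q := by
    rw [hqdef]
    gcongr
    exact le_max_left p θ
  -- basic constants
  set A : ℝ := min (min (min (Y0 - phi 0) (psi 0 - Y0)) ystar) 1 / 2 with hAdef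
  have hA : 0 < A := by
    rw [hAdef]
    have h1 : 0 < Y0 - phi 0 := by linarith
    have h2 : 0 < psi 0 - Y0 := by linarith
    positivity
  have hAd0 : 2 * A ≤ Y0 - phi 0 := by
    rw [hAdef]
    have := min_le_left (min (min (Y0 - phi 0) (psi 0 - Y0)) ystar) 1
    have := min_le_left (min (Y0 - phi 0) (psi 0 - Y0)) ystar
    have := min_le_left (Y0 - phi 0) (psi 0 - Y0)
    linarith
  have hAe0 : 2 * A ≤ psi 0 - Y0 := by
    rw [hAdef]
    have := min_le_left (min (min (Y0 - phi 0) (psi 0 - Y0)) ystar) 1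
    have := min_le_left (min (Y0 - phi 0) (psi 0 - Y0)) ystar
    have := min_le_right (Y0 - phi 0) (psi 0 - Y0)
    linarith
  have hAy : 2 * A ≤ ystar := by
    rw [hAdef]
    have := min_le_left (min (min (Y0 - phi 0) (psi 0 - Y0)) ystar) 1
    have := min_le_right (min (Y0 - phi 0) (psi 0 - Y0)) ystar
    linarith
  have hA1 : 2 * A ≤ 1 := by
    rw [hAdef]
    have := min_le_right (min (min (Y0 - phi 0) (psi 0 - Y0)) ystar) 1
    linarith
  set B : ℝ := (c2 / 2 ^ gam) ^ (lam / θ) with hBdef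
  have hB : 0 < B := by
    rw [hBdef]
    have : (0:ℝ) < (2:ℝ) ^ gam := Real.rpow_pos_of_pos (by norm_num) gam
    positivity
  set W : ℝ := (psi 0 - phi 0) + 2 * K * T ^ lam with hWdef
  have hTlam : (0:ℝ) < T ^ lam := Real.rpow_pos_of_pos hT lam
  have hW : 0 < W := by
    rw [hWdef]
    have hKT : (0:ℝ) < K * T ^ lam := mul_pos hK hTlam
    linarith only [hY0l, hY0r, hKT]
  set Q : ℝ := c1 * 2 ^ p * (W + T ^ lam) with hQdef
  have h2p : (0:ℝ) < (2:ℝ) ^ p := Real.rpow_pos_of_pos (by norm_num) p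
  have h2pθ : (0:ℝ) < (2:ℝ) ^ (p/θ) := Real.rpow_pos_of_pos (by norm_num) _
  have hQ : 0 < Q := by rw [hQdef]; positivity
  have hApp : (0:ℝ) < A ^ p := Real.rpow_pos_of_pos hA p
  have hBpp : (0:ℝ) < B ^ p := Real.rpow_pos_of_pos hB p
  have hKpθ : (0:ℝ) < K ^ (p/θ) := Real.rpow_pos_of_pos hK _
  set D1 : ℝ := |b 0 Y0| + Q * 2 ^ p / A ^ p + Q * 2 ^ p * 2 ^ (p/θ) * (K ^ (p/θ) + 1) / B ^ p
    with hD1def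
  set D2 : ℝ := Q * 2 ^ p * 2 ^ (p/θ) / B ^ p with hD2def
  have hD1 : 0 < D1 := by
    rw [hD1def]
    have h0 : (0:ℝ) ≤ |b 0 Y0| := abs_nonneg _
    have h1 : (0:ℝ) < Q * 2 ^ p / A ^ p := by positivity
    have h2 : (0:ℝ) < Q * 2 ^ p * 2 ^ (p/θ) * (K ^ (p/θ) + 1) / B ^ p := by positivity
    linarith
  have hD2 : 0 < D2 := by rw [hD2def]; positivity
  have hT1l : (0:ℝ) < T ^ (1 - lam) := Real.rpow_pos_of_pos hT _
  refine ⟨(D1 + D2) * T ^ (1 - lam) + 1, by positivity, ?_⟩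
  set C : ℝ := (D1 + D2) * T ^ (1 - lam) + 1 with hCdef
  intro Z Lam hLam hZ0 hZH N hN hc3N Yh hYh0 hsch
  set tt : ℕ → ℝ := fun i => (i:ℝ) * T / (N:ℝ) with httdef
  have hNpos : (0:ℝ) < (N:ℝ) := by exact_mod_cast hN
  have hΔ : (0:ℝ) < T / (N:ℝ) := by positivity
  have htt0 : tt 0 = 0 := by
    show ((0:ℕ):ℝ) * T / (N:ℝ) = 0
    simp
  have httmem : ∀ i : ℕ, i ≤ N → tt i ∈ Set.Icc (0:ℝ) T := by
    intro i hi
    have hc : (i:ℝ) ≤ (N:ℝ) := by exact_mod_cast hi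
    constructor
    · show (0:ℝ) ≤ (i:ℝ) * T / (N:ℝ)
      positivity
    · show (i:ℝ) * T / (N:ℝ) ≤ T
      rw [div_le_iff₀ hNpos]
      calc (i:ℝ) * T ≤ (N:ℝ) * T := by gcongr
        _ = T * (N:ℝ) := mul_comm _ _
  have httmono : ∀ j k : ℕ, j ≤ k → tt j ≤ tt k := by
    intro j k h
    have hc : (j:ℝ) ≤ (k:ℝ) := by exact_mod_cast h
    show (j:ℝ) * T / (N:ℝ) ≤ (k:ℝ) * T / (N:ℝ)
    gcongr
  have httdiff : ∀ j k : ℕ, tt k - tt j = ((k:ℝ) - (j:ℝ)) * (T / (N:ℝ)) := by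
    intro j k
    show (k:ℝ) * T / (N:ℝ) - (j:ℝ) * T / (N:ℝ) = _
    field_simp
  have hcast : ∀ i : ℕ, tt (i+1) = ((i:ℝ) + 1) * T / (N:ℝ) := by
    intro i
    show ((i+1:ℕ):ℝ) * T / (N:ℝ) = _
    push_cast
    ring
  have hsch' : ∀ i : ℕ, i < N →
      phi (tt (i+1)) < Yh (i+1) ∧ Yh (i+1) < psi (tt (i+1)) ∧
      Yh (i+1) = Yh i + b (tt (i+1)) (Yh (i+1)) * (T / (N:ℝ)) + (Z (tt (i+1)) - Z (tt i)) := by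
    intro i hi
    rw [hcast i]
    rw [show tt i = (i:ℝ) * T / (N:ℝ) from rfl]
    exact hsch i hi
  have hin : ∀ i : ℕ, i ≤ N → phi (tt i) < Yh i ∧ Yh i < psi (tt i) := by
    intro i hi
    cases i with
    | zero => rw [htt0, hYh0]; exact ⟨hY0l, hY0r⟩
    | succ m =>
      obtain ⟨h1, h2, _⟩ := hsch' m (by omega)
      exact ⟨h1, h2⟩
  -- telescoping
  have htele : ∀ j k : ℕ, j ≤ k → k ≤ N →
      Yh k - Yh j = (∑ i ∈ Finset.Ico j k, b (tt (i+1)) (Yh (i+1)) * (T / (N:ℝ)))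
        + (Z (tt k) - Z (tt j)) := by
    intro j k hjk hkN
    have hu := tele_sum (fun i => Yh i - Z (tt i)) j k hjk
    have heq : ∑ i ∈ Finset.Ico j k, ((fun i => Yh i - Z (tt i)) (i+1) - (fun i => Yh i - Z (tt i)) i)
        = ∑ i ∈ Finset.Ico j k, b (tt (i+1)) (Yh (i+1)) * (T / (N:ℝ)) := by
      apply Finset.sum_congr rfl
      intro i hi
      rw [Finset.mem_Ico] at hi
      obtain ⟨_, _, h3⟩ := hsch' i (by omega)
      simp only []
      linarith [h3]
    rw [heq] at hu
    linarith [hu]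
  -- Hölder bounds at grid points
  have hZd : ∀ j k : ℕ, j ≤ k → k ≤ N → |Z (tt k) - Z (tt j)| ≤ Lam * (tt k - tt j) ^ lam := by
    intro j k hjk hkN
    have h := hZH (tt j) (httmem j (hjk.trans hkN)) (tt k) (httmem k hkN)
    have hnn : (0:ℝ) ≤ tt k - tt j := by linarith [httmono j k hjk]
    rwa [abs_of_nonneg hnn] at h
  have hphid : ∀ j k : ℕ, j ≤ k → k ≤ N →
      |phi (tt k) - phi (tt j)| ≤ K * (tt k - tt j) ^ lam := by
    intro j k hjk hkN
    have h := hphiH (tt j) (httmem j (hjk.trans hkN)) (tt k) (httmem k hkN)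
    have hnn : (0:ℝ) ≤ tt k - tt j := by linarith [httmono j k hjk]
    rwa [abs_of_nonneg hnn] at h
  have hpsid : ∀ j k : ℕ, j ≤ k → k ≤ N →
      |psi (tt k) - psi (tt j)| ≤ K * (tt k - tt j) ^ lam := by
    intro j k hjk hkN
    have h := hpsiH (tt j) (httmem j (hjk.trans hkN)) (tt k) (httmem k hkN)
    have hnn : (0:ℝ) ≤ tt k - tt j := by linarith [httmono j k hjk]
    rwa [abs_of_nonneg hnn] at h
  -- epsilon
  set L : ℝ := Lam + K with hLdef
  have hL : 0 < L := by rw [hLdef]; linarith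
  set ε : ℝ := min A (B * L ^ (-(1/θ))) with hεdef
  have hLθ : (0:ℝ) < L ^ (-(1/θ)) := Real.rpow_pos_of_pos hL _
  have hε : 0 < ε := by rw [hεdef]; positivity
  have hεA : ε ≤ A := min_le_left _ _
  have hεB : ε ≤ B * L ^ (-(1/θ)) := min_le_right _ _
  have hstar : ∀ τ : ℝ, 0 < τ → L * τ ^ lam ≤ ε + c2 * τ / (2 * ε) ^ gam :=
    star_lemma hlam0 hlam1 hθ hc2 hL hε hεB
  -- sum lower bound machinery
  have hsumlen : ∀ j k : ℕ, j ≤ k → ((Finset.Ico j k).card : ℝ) = (k:ℝ) - (j:ℝ) := by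
    intro j k hjk
    rw [Nat.card_Ico]
    exact Nat.cast_sub hjk
  -- barrier: lower
  have hdlow : ∀ i : ℕ, i ≤ N → ε ≤ Yh i - phi (tt i) := by
    apply aux_barrier_s8 (fun i => Yh i - phi (tt i)) N ε hε
    · simp only [htt0, hYh0]
      linarith [hεA, hAd0]
    · intro j k hjk hkN hmid
      have hjN : j ≤ N := le_of_lt (hjk.trans_le hkN)
      have hcnk : (j:ℝ) < (k:ℝ) := by exact_mod_cast hjk
      have hτpos : 0 < tt k - tt j := by
        rw [httdiff]
        have h1 : (0:ℝ) < (k:ℝ) - (j:ℝ) := by linarith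
        exact mul_pos h1 hΔ
      have hτ : tt k - tt j = ((k:ℝ) - (j:ℝ)) * (T/(N:ℝ)) := httdiff j k
      have hbterm : ∀ i ∈ Finset.Ico j k,
          c2 / (2*ε)^gam * (T/(N:ℝ)) ≤ b (tt (i+1)) (Yh (i+1)) * (T/(N:ℝ)) := by
        intro i hi
        rw [Finset.mem_Ico] at hi
        have hmN : i + 1 ≤ N := by omega
        have hd : Yh (i+1) - phi (tt (i+1)) < 2*ε := hmid (i+1) (by omega) (by omega)
        obtain ⟨hl, hr⟩ := hin (i+1) hmN
        have hblow := hB3low (tt (i+1)) (httmem (i+1) hmN) (Yh (i+1)) hl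
          (by linarith [hAy, hεA]) hr
        have hdist : (0:ℝ) < Yh (i+1) - phi (tt (i+1)) := by linarith
        have hrp : (Yh (i+1) - phi (tt (i+1))) ^ gam ≤ (2*ε)^gam :=
          Real.rpow_le_rpow hdist.le (by linarith) hgam0.le
        have h2 : c2 / (2*ε)^gam ≤ c2 / (Yh (i+1) - phi (tt (i+1)))^gam := by
          apply div_le_div_of_nonneg_left hc2.le (Real.rpow_pos_of_pos hdist gam) hrp
        exact mul_le_mul_of_nonneg_right (h2.trans hblow) hΔ.le
      have hsum : c2 * (tt k - tt j) / (2*ε)^gam ≤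
          ∑ i ∈ Finset.Ico j k, b (tt (i+1)) (Yh (i+1)) * (T/(N:ℝ)) := by
        have h := Finset.sum_le_sum hbterm
        rw [Finset.sum_const, nsmul_eq_mul, hsumlen j k hjk.le] at h
        calc c2 * (tt k - tt j) / (2*ε)^gam
            = ((k:ℝ)-(j:ℝ)) * (c2 / (2*ε)^gam * (T/(N:ℝ))) := by rw [hτ]; ring
          _ ≤ _ := h
      have hZb := hZd j k hjk.le hkN
      have hpb := hphid j k hjk.le hkN
      have htl := htele j k hjk.le hkN
      have hst := hstar (tt k - tt j) hτpos
      have h1 : -(Lam * (tt k - tt j)^lam) ≤ Z (tt k) - Z (tt j) := by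
        linarith [neg_abs_le (Z (tt k) - Z (tt j))]
      have h2 : phi (tt k) - phi (tt j) ≤ K * (tt k - tt j)^lam := by
        linarith [le_abs_self (phi (tt k) - phi (tt j))]
      have hLτ : L * (tt k - tt j)^lam = Lam * (tt k - tt j)^lam + K * (tt k - tt j)^lam := by
        rw [hLdef]; ring
      linarith only [hsum, hst, htl, h1, h2, hLτ]
  have heup : ∀ i : ℕ, i ≤ N → ε ≤ psi (tt i) - Yh i := by
    apply aux_barrier_s8 (fun i => psi (tt i) - Yh i) N ε hε
    · simp only [htt0, hYh0]
      linarith [hεA, hAe0]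
    · intro j k hjk hkN hmid
      have hjN : j ≤ N := le_of_lt (hjk.trans_le hkN)
      have hcnk : (j:ℝ) < (k:ℝ) := by exact_mod_cast hjk
      have hτpos : 0 < tt k - tt j := by
        rw [httdiff]
        have h1 : (0:ℝ) < (k:ℝ) - (j:ℝ) := by linarith
        exact mul_pos h1 hΔ
      have hτ : tt k - tt j = ((k:ℝ) - (j:ℝ)) * (T/(N:ℝ)) := httdiff j k
      have hbterm : ∀ i ∈ Finset.Ico j k,
          b (tt (i+1)) (Yh (i+1)) * (T/(N:ℝ)) ≤ -(c2 / (2*ε)^gam) * (T/(N:ℝ)) := by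
        intro i hi
        rw [Finset.mem_Ico] at hi
        have hmN : i + 1 ≤ N := by omega
        have hd : psi (tt (i+1)) - Yh (i+1) < 2*ε := hmid (i+1) (by omega) (by omega)
        obtain ⟨hl, hr⟩ := hin (i+1) hmN
        have hbup := hB3up (tt (i+1)) (httmem (i+1) hmN) (Yh (i+1))
          (by linarith [hAy, hεA]) hr hl
        have hdist : (0:ℝ) < psi (tt (i+1)) - Yh (i+1) := by linarith
        have hrp : (psi (tt (i+1)) - Yh (i+1)) ^ gam ≤ (2*ε)^gam :=
          Real.rpow_le_rpow hdist.le (by linarith) hgam0.le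
        have h2 : c2 / (2*ε)^gam ≤ c2 / (psi (tt (i+1)) - Yh (i+1))^gam := by
          apply div_le_div_of_nonneg_left hc2.le (Real.rpow_pos_of_pos hdist gam) hrp
        have h3 : b (tt (i+1)) (Yh (i+1)) ≤ -(c2 / (2*ε)^gam) := by linarith
        exact mul_le_mul_of_nonneg_right h3 hΔ.le
      have hsum : ∑ i ∈ Finset.Ico j k, b (tt (i+1)) (Yh (i+1)) * (T/(N:ℝ)) ≤
          -(c2 * (tt k - tt j) / (2*ε)^gam) := by
        have h := Finset.sum_le_sum hbterm
        rw [Finset.sum_const, nsmul_eq_mul, hsumlen j k hjk.le] at h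
        calc ∑ i ∈ Finset.Ico j k, b (tt (i+1)) (Yh (i+1)) * (T/(N:ℝ))
            ≤ ((k:ℝ)-(j:ℝ)) * (-(c2 / (2*ε)^gam) * (T/(N:ℝ))) := h
          _ = -(c2 * (tt k - tt j) / (2*ε)^gam) := by rw [hτ]; ring
      have hZb := hZd j k hjk.le hkN
      have hpb := hpsid j k hjk.le hkN
      have htl := htele j k hjk.le hkN
      have hst := hstar (tt k - tt j) hτpos
      have h1 : Z (tt k) - Z (tt j) ≤ Lam * (tt k - tt j)^lam := by
        linarith [le_abs_self (Z (tt k) - Z (tt j))]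
      have h2 : -(K * (tt k - tt j)^lam) ≤ psi (tt k) - psi (tt j) := by
        linarith [neg_abs_le (psi (tt k) - psi (tt j))]
      have hLτ : L * (tt k - tt j)^lam = Lam * (tt k - tt j)^lam + K * (tt k - tt j)^lam := by
        rw [hLdef]; ring
      linarith only [hsum, hst, htl, h1, h2, hLτ]
  -- bound |b| on the grid
  have h0mem : (0:ℝ) ∈ Set.Icc (0:ℝ) T := ⟨le_refl _, hT.le⟩
  have hψφ0 : (0:ℝ) < psi 0 - phi 0 := by linarith
  have httT : ∀ i : ℕ, i ≤ N → |tt i - 0| ^ lam ≤ T ^ lam := by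
    intro i hi
    apply Real.rpow_le_rpow (abs_nonneg _) ?_ hlam0.le
    rw [sub_zero, abs_of_nonneg (httmem i hi).1]
    exact (httmem i hi).2
  have hbdd : BddAbove (Set.range fun t : Set.Icc (0:ℝ) T => |psi t.1 - phi t.1|) := by
    refine ⟨(psi 0 - phi 0) + 2*K*T^lam, ?_⟩
    rintro x ⟨t, rfl⟩
    have ht := t.2
    have h1 := hpsiH 0 h0mem t.1 ht
    have h2 := hphiH 0 h0mem t.1 ht
    have htT : |t.1 - 0|^lam ≤ T^lam := by
      apply Real.rpow_le_rpow (abs_nonneg _) ?_ hlam0.le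
      rw [sub_zero, abs_of_nonneg ht.1]
      exact ht.2
    have h1' : |psi t.1 - psi 0| ≤ K * T^lam := by
      calc |psi t.1 - psi 0| ≤ K * |t.1 - 0|^lam := h1
        _ ≤ K * T^lam := mul_le_mul_of_nonneg_left htT hK.le
    have h2' : |phi t.1 - phi 0| ≤ K * T^lam := by
      calc |phi t.1 - phi 0| ≤ K * |t.1 - 0|^lam := h2
        _ ≤ K * T^lam := mul_le_mul_of_nonneg_left htT hK.le
    have e1 : psi t.1 - phi t.1 = (psi t.1 - psi 0) + (psi 0 - phi 0) + (phi 0 - phi t.1) := by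
      ring
    calc |psi t.1 - phi t.1|
        ≤ |psi t.1 - psi 0| + |psi 0 - phi 0| + |phi 0 - phi t.1| := by
          rw [e1]; exact abs_add_three _ _ _
      _ ≤ K*T^lam + (psi 0 - phi 0) + K*T^lam := by
          rw [abs_of_pos hψφ0, abs_sub_comm (phi 0)]
          linarith
      _ = (psi 0 - phi 0) + 2*K*T^lam := by ring
  have hsup : psi 0 - phi 0 ≤ (⨆ t : Set.Icc (0:ℝ) T, |psi t.1 - phi t.1|) := by
    have h := le_ciSup hbdd (⟨0, h0mem⟩ : Set.Icc (0:ℝ) T)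
    simpa [abs_of_pos hψφ0] using h
  have hεlt : ε/2 < min 1 ((⨆ t : Set.Icc (0:ℝ) T, |psi t.1 - phi t.1|) / 2) := by
    apply lt_min
    · linarith [hεA, hA1]
    · linarith [hεA, hAd0, hAe0, hsup]
  have hMb : ∀ i : ℕ, i ≤ N →
      |b (tt i) (Yh i)| ≤ |b 0 Y0| + c1 / (ε/2) ^ p * (W + T ^ lam) := by
    intro i hi
    have hd := hdlow i hi
    have he := heup i hi
    obtain ⟨hl, hr⟩ := hin i hi
    have hmemi := httmem i hi
    have happ := hB2lip (ε/2) (by linarith) hεlt (tt i) hmemi 0 h0mem (Yh i) Y0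
      (by linarith) (by linarith) (by linarith [hεA, hAd0]) (by linarith [hεA, hAe0])
    have hψb : psi (tt i) ≤ psi 0 + K*T^lam := by
      have h1 := hpsiH 0 h0mem (tt i) hmemi
      have h2 := httT i hi
      have h3 : |psi (tt i) - psi 0| ≤ K * T^lam := by
        calc |psi (tt i) - psi 0| ≤ K * |tt i - 0|^lam := h1
          _ ≤ K * T^lam := mul_le_mul_of_nonneg_left h2 hK.le
      linarith [le_abs_self (psi (tt i) - psi 0)]
    have hφb : phi 0 - K*T^lam ≤ phi (tt i) := by
      have h1 := hphiH 0 h0mem (tt i) hmemi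
      have h2 := httT i hi
      have h3 : |phi (tt i) - phi 0| ≤ K * T^lam := by
        calc |phi (tt i) - phi 0| ≤ K * |tt i - 0|^lam := h1
          _ ≤ K * T^lam := mul_le_mul_of_nonneg_left h2 hK.le
      linarith [neg_abs_le (phi (tt i) - phi 0)]
    have hYW : |Yh i - Y0| ≤ W := by
      rw [abs_sub_le_iff, hWdef]
      have hKT : (0:ℝ) < K * T ^ lam := mul_pos hK hTlam
      constructor
      · linarith only [hr, hψb, hY0l, hKT]
      · linarith only [hl, hφb, hY0r, hKT]
    have harg : |Yh i - Y0| + |tt i - 0|^lam ≤ W + T^lam := by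
      have := httT i hi
      linarith
    have hcoef : (0:ℝ) ≤ c1 / (ε/2)^p := by
      have : (0:ℝ) < (ε/2)^p := Real.rpow_pos_of_pos (by linarith) p
      positivity
    calc |b (tt i) (Yh i)| = |(b (tt i) (Yh i) - b 0 Y0) + b 0 Y0| := by ring_nf
      _ ≤ |b (tt i) (Yh i) - b 0 Y0| + |b 0 Y0| := abs_add_le _ _
      _ ≤ c1 / (ε/2)^p * (W + T^lam) + |b 0 Y0| := by
          have := mul_le_mul_of_nonneg_left harg hcoef
          linarith [happ]
      _ = |b 0 Y0| + c1 / (ε/2)^p * (W + T^lam) := by ring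
  set M : ℝ := |b 0 Y0| + c1 / (ε/2) ^ p * (W + T ^ lam) with hMdef
  have hM0 : 0 ≤ M := by
    rw [hMdef]
    have h1 : (0:ℝ) < (ε/2) ^ p := Real.rpow_pos_of_pos (by linarith) p
    have h2 : (0:ℝ) ≤ |b 0 Y0| := abs_nonneg _
    have h3 : (0:ℝ) ≤ c1 / (ε/2) ^ p * (W + T ^ lam) := by positivity
    linarith
  have hMD : M ≤ D1 + D2 * Lam ^ q := by
    have hq0 : (0:ℝ) ≤ p/θ := by positivity
    have hLam_pθ : Lam ^ (p/θ) ≤ 1 + Lam ^ q := rpow_le_one_add hLam hq0 hpθq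
    have hεp : (0:ℝ) < ε ^ p := Real.rpow_pos_of_pos hε p
    have hc1b : c1 / (ε/2)^p = c1 * 2^p / ε^p := by
      rw [Real.div_rpow hε.le (by norm_num : (0:ℝ) ≤ 2)]
      rw [div_div_eq_mul_div]
    have hLθp : (0:ℝ) < L ^ (1/θ) := Real.rpow_pos_of_pos hL _
    have hinv : 1/ε ≤ 1/A + L^(1/θ)/B := by
      rcases le_total A (B * L ^ (-(1/θ))) with h | h
      · have he : ε = A := min_eq_left h
        rw [he]
        have : (0:ℝ) ≤ L^(1/θ)/B := by positivity
        linarith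
      · have he : ε = B * L ^ (-(1/θ)) := min_eq_right h
        rw [he]
        have hrw : 1/(B * L ^ (-(1/θ))) = L^(1/θ)/B := by
          rw [Real.rpow_neg hL.le]
          field_simp
        rw [hrw]
        have : (0:ℝ) ≤ 1/A := by positivity
        linarith
    have h1ε : 1/ε^p ≤ (1/A + L^(1/θ)/B)^p := by
      have h := Real.rpow_le_rpow (by positivity) hinv hp0.le
      rwa [Real.div_rpow (by norm_num : (0:ℝ) ≤ 1) hε.le, Real.one_rpow] at h
    have hsplit2 : (1/A + L^(1/θ)/B)^p ≤ 2^p * ((1/A)^p + (L^(1/θ)/B)^p) :=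
      two_rpow_split (by positivity) (by positivity) hp0.le
    have hLp : (L^(1/θ)/B)^p = L^(p/θ)/B^p := by
      rw [Real.div_rpow (Real.rpow_nonneg hL.le _) hB.le, ← Real.rpow_mul hL.le]
      rw [show 1/θ*p = p/θ by ring]
    have hAp : (1/A)^p = 1/A^p := by
      rw [Real.div_rpow (by norm_num : (0:ℝ) ≤ 1) hA.le, Real.one_rpow]
    have hLKp : L^(p/θ) ≤ 2^(p/θ) * (Lam^(p/θ) + K^(p/θ)) := by
      rw [hLdef]
      exact two_rpow_split hLam.le hK.le hq0
    have key : L^(p/θ) ≤ 2^(p/θ) * (K^(p/θ) + 1 + Lam^q) := by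
      calc L^(p/θ) ≤ 2^(p/θ)*(Lam^(p/θ)+K^(p/θ)) := hLKp
        _ ≤ 2^(p/θ)*((1+Lam^q)+K^(p/θ)) := by
            apply mul_le_mul_of_nonneg_left ?_ h2pθ.le
            linarith
        _ = 2^(p/θ)*(K^(p/θ)+1+Lam^q) := by ring
    have hM1 : M = |b 0 Y0| + Q * (1/ε^p) := by
      rw [hMdef, hQdef, hc1b]
      ring
    have step1 : Q * (1/ε^p) ≤ Q * (2^p * (1/A^p + L^(p/θ)/B^p)) := by
      apply mul_le_mul_of_nonneg_left ?_ hQ.le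
      calc 1/ε^p ≤ (1/A + L^(1/θ)/B)^p := h1ε
        _ ≤ 2^p*((1/A)^p + (L^(1/θ)/B)^p) := hsplit2
        _ = 2^p*(1/A^p + L^(p/θ)/B^p) := by rw [hAp, hLp]
    have hcoef : (0:ℝ) ≤ Q * 2^p / B^p := by positivity
    have key2 := mul_le_mul_of_nonneg_left key hcoef
    rw [hM1, hD1def, hD2def]
    calc |b 0 Y0| + Q * (1/ε^p)
        ≤ |b 0 Y0| + Q * (2^p * (1/A^p + L^(p/θ)/B^p)) := by linarith only [step1]
      _ = |b 0 Y0| + Q*2^p/A^p + (Q*2^p/B^p) * L^(p/θ) := by ring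
      _ ≤ |b 0 Y0| + Q*2^p/A^p + (Q*2^p/B^p) * (2^(p/θ)*(K^(p/θ)+1+Lam^q)) := by
          linarith only [key2]
      _ = |b 0 Y0| + Q * 2^p / A^p + Q * 2^p * 2^(p/θ) * (K^(p/θ)+1) / B^p
          + Q * 2^p * 2^(p/θ) / B^p * Lam^q := by ring
  -- main estimate for ordered indices
  have hmain : ∀ n k : ℕ, n ≤ k → k ≤ N →
      |Yh k - Yh n| ≤ C * (1 + Lam ^ q) * (tt k - tt n) ^ lam := by
    intro n k hnk hkN
    rcases eq_or_lt_of_le hnk with rfl | hlt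
    · rw [sub_self, sub_self, Real.zero_rpow (ne_of_gt hlam0), abs_zero, mul_zero]
    · have hcnk : (n:ℝ) < (k:ℝ) := by exact_mod_cast hlt
      have hτpos : 0 < tt k - tt n := by
        rw [httdiff]
        have h1 : (0:ℝ) < (k:ℝ) - (n:ℝ) := by linarith
        exact mul_pos h1 hΔ
      have hτT : tt k - tt n ≤ T := by
        have h1 := (httmem k hkN).2
        have h2 := (httmem n (hnk.trans hkN)).1
        linarith
      have htl := htele n k hnk hkN
      have hZb := hZd n k hnk hkN
      have hτlam : (0:ℝ) < (tt k - tt n)^lam := Real.rpow_pos_of_pos hτpos lam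
      have hsum : |∑ i ∈ Finset.Ico n k, b (tt (i+1)) (Yh (i+1)) * (T/(N:ℝ))| ≤
          M * (tt k - tt n) := by
        calc |∑ i ∈ Finset.Ico n k, b (tt (i+1)) (Yh (i+1)) * (T/(N:ℝ))|
            ≤ ∑ i ∈ Finset.Ico n k, |b (tt (i+1)) (Yh (i+1)) * (T/(N:ℝ))| :=
              Finset.abs_sum_le_sum_abs _ _
          _ ≤ ∑ _i ∈ Finset.Ico n k, M * (T/(N:ℝ)) := by
              apply Finset.sum_le_sum
              intro i hi
              rw [Finset.mem_Ico] at hi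
              rw [abs_mul, abs_of_pos hΔ]
              exact mul_le_mul_of_nonneg_right (hMb (i+1) (by omega)) hΔ.le
          _ = ((k:ℝ)-(n:ℝ)) * (M * (T/(N:ℝ))) := by
              rw [Finset.sum_const, nsmul_eq_mul, hsumlen n k hnk]
          _ = M * (tt k - tt n) := by rw [httdiff]; ring
      have habs2 : |Yh k - Yh n| ≤ M * (tt k - tt n) + Lam * (tt k - tt n)^lam := by
        rw [htl]
        calc |(∑ i ∈ Finset.Ico n k, b (tt (i+1)) (Yh (i+1)) * (T/(N:ℝ)))
              + (Z (tt k) - Z (tt n))|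
            ≤ |∑ i ∈ Finset.Ico n k, b (tt (i+1)) (Yh (i+1)) * (T/(N:ℝ))|
              + |Z (tt k) - Z (tt n)| := abs_add_le _ _
          _ ≤ M * (tt k - tt n) + Lam * (tt k - tt n)^lam := add_le_add hsum hZb
      have hτsplit : tt k - tt n = (tt k - tt n)^(1-lam) * (tt k - tt n)^lam := by
        rw [← Real.rpow_add hτpos]
        norm_num
      have hτpow : (tt k - tt n)^(1-lam) ≤ T^(1-lam) :=
        Real.rpow_le_rpow hτpos.le hτT (by linarith)
      have hMτ : M * (tt k - tt n) ≤ M * T^(1-lam) * (tt k - tt n)^lam := by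
        calc M * (tt k - tt n) = M * ((tt k - tt n)^(1-lam) * (tt k - tt n)^lam) := by
              rw [← hτsplit]
          _ ≤ M * (T^(1-lam) * (tt k - tt n)^lam) := by
              apply mul_le_mul_of_nonneg_left ?_ hM0
              exact mul_le_mul_of_nonneg_right hτpow hτlam.le
          _ = M * T^(1-lam) * (tt k - tt n)^lam := by ring
      have hLamq : Lam ≤ 1 + Lam^q := by
        have h := rpow_le_one_add hLam zero_le_one hq1
        rwa [Real.rpow_one] at h
      have hMD' : M * T^(1-lam) + Lam ≤ C * (1 + Lam^q) := by
        have h1 : M * T^(1-lam) ≤ (D1 + D2*Lam^q) * T^(1-lam) :=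
          mul_le_mul_of_nonneg_right hMD hT1l.le
        rw [hCdef]
        have hLq : (0:ℝ) ≤ Lam^q := (Real.rpow_pos_of_pos hLam q).le
        linarith only [h1, hLamq, hLq, mul_nonneg (mul_nonneg hD1.le hT1l.le) hLq,
          mul_nonneg hD2.le hT1l.le]
      calc |Yh k - Yh n| ≤ M * (tt k - tt n) + Lam * (tt k - tt n)^lam := habs2
        _ ≤ M * T^(1-lam) * (tt k - tt n)^lam + Lam * (tt k - tt n)^lam := by linarith
        _ = (M * T^(1-lam) + Lam) * (tt k - tt n)^lam := by ring
        _ ≤ C * (1 + Lam^q) * (tt k - tt n)^lam :=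
            mul_le_mul_of_nonneg_right hMD' hτlam.le
  -- conclude
  intro k hk n hn
  rcases le_total n k with h | h
  · have := hmain n k h hk
    have habs : |(k:ℝ) * T / (N:ℝ) - (n:ℝ) * T / (N:ℝ)| = tt k - tt n := by
      rw [show (k:ℝ) * T / (N:ℝ) = tt k from rfl, show (n:ℝ) * T / (N:ℝ) = tt n from rfl]
      exact abs_of_nonneg (by linarith [httmono n k h])
    rw [habs]
    exact this
  · have := hmain k n h hn
    have habs : |(k:ℝ) * T / (N:ℝ) - (n:ℝ) * T / (N:ℝ)| = tt n - tt k := by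
      rw [show (k:ℝ) * T / (N:ℝ) = tt k from rfl, show (n:ℝ) * T / (N:ℝ) = tt n from rfl]
      rw [abs_sub_comm]
      exact abs_of_nonneg (by linarith [httmono k n h])
    rw [habs, abs_sub_comm]
    exact this
end

section
/- Under Assumptions (B1)–(B4), fix a noise path Z with Hölder constant Λ, let Y be the corresponding pathwise solution and, for each N with c3·Δ_N < 1, let Ŷ_N be the corresponding drift-implicit Euler scheme. Then for every r ≥ 1 there exists a constant 𝒞 > 0, independent of N, such that max_{k=0,…,N} |Y(t_k) − Ŷ_N(t_k)|^r ≤ 𝒞·Δ_N^{λr} for every N with c3·Δ_N < 1. -/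
open MeasureTheory

private lemma holder_cont' (T lam K : ℝ) (hlam : 0 < lam) (f : ℝ → ℝ)
    (hf : ∀ s ∈ Set.Icc (0:ℝ) T, ∀ t ∈ Set.Icc (0:ℝ) T, |f t - f s| ≤ K * |t - s| ^ lam) :
    ContinuousOn f (Set.Icc (0:ℝ) T) := by
  intro s hs
  have h1 : Filter.Tendsto (fun t : ℝ => |t - s|) (nhdsWithin s (Set.Icc (0:ℝ) T)) (nhds 0) := by
    have h : Continuous (fun t : ℝ => |t - s|) := (continuous_id.sub continuous_const).abs
    have := h.tendsto s
    simp only [sub_self, abs_zero] at this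
    exact this.mono_left nhdsWithin_le_nhds
  have h2 : ContinuousAt (fun x : ℝ => x ^ lam) 0 :=
    Real.continuousAt_rpow_const 0 lam (Or.inr hlam.le)
  have h3 : Filter.Tendsto (fun t : ℝ => K * |t - s| ^ lam) (nhdsWithin s (Set.Icc (0:ℝ) T)) (nhds 0) := by
    have := (h2.tendsto.comp h1).const_mul K
    simpa [Real.zero_rpow hlam.ne', Function.comp] using this
  have h4 : Filter.Tendsto (fun t => |f t - f s|) (nhdsWithin s (Set.Icc (0:ℝ) T)) (nhds 0) := by
    apply squeeze_zero' (Filter.Eventually.of_forall (fun t => abs_nonneg _)) _ h3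
    exact eventually_nhdsWithin_of_forall (fun t ht => hf s hs t ht)
  have h5 : Filter.Tendsto (fun t => f t - f s) (nhdsWithin s (Set.Icc (0:ℝ) T)) (nhds 0) :=
    (tendsto_zero_iff_abs_tendsto_zero _).mpr h4
  have := h5.add_const (f s)
  simpa [ContinuousWithinAt] using this

set_option maxHeartbeats 2000000 in
theorem stmt_9
    (T lam : ℝ) (hT : 0 < T) (hlam : lam ∈ Set.Ioo (0:ℝ) 1)
    (phi psi : ℝ → ℝ) (K : ℝ) (hK : 0 < K)
    (hphiH : ∀ s ∈ Set.Icc (0:ℝ) T, ∀ t ∈ Set.Icc (0:ℝ) T, |phi t - phi s| ≤ K * |t - s| ^ lam)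
    (hpsiH : ∀ s ∈ Set.Icc (0:ℝ) T, ∀ t ∈ Set.Icc (0:ℝ) T, |psi t - psi s| ≤ K * |t - s| ^ lam)
    (hphipsi : ∀ t ∈ Set.Icc (0:ℝ) T, phi t < psi t)
    (b : ℝ → ℝ → ℝ) (c1 p c2 ystar gam : ℝ)
    (hc1 : 0 < c1) (hp : 1 < p) (hc2 : 0 < c2) (hystar : 0 < ystar)
    (hgam : 1 / lam - 1 < gam)
    (hB2cont : ContinuousOn (fun q : ℝ × ℝ => b q.1 q.2)
      {q : ℝ × ℝ | q.1 ∈ Set.Icc (0:ℝ) T ∧ phi q.1 < q.2 ∧ q.2 < psi q.1})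
    (hB2lip : ∀ ε : ℝ, 0 < ε → ε < min 1 ((⨆ t : Set.Icc (0:ℝ) T, |psi t.1 - phi t.1|) / 2) →
      ∀ t1 ∈ Set.Icc (0:ℝ) T, ∀ t2 ∈ Set.Icc (0:ℝ) T, ∀ y1 y2 : ℝ,
        phi t1 + ε < y1 → y1 < psi t1 - ε → phi t2 + ε < y2 → y2 < psi t2 - ε →
        |b t1 y1 - b t2 y2| ≤ c1 / ε ^ p * (|y1 - y2| + |t1 - t2| ^ lam))
    (hB3low : ∀ t ∈ Set.Icc (0:ℝ) T, ∀ y : ℝ, phi t < y → y ≤ phi t + ystar → y < psi t →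
      c2 / (y - phi t) ^ gam ≤ b t y)
    (hB3up : ∀ t ∈ Set.Icc (0:ℝ) T, ∀ y : ℝ, psi t - ystar ≤ y → y < psi t → phi t < y →
      b t y ≤ -(c2 / (psi t - y) ^ gam))
    (Y0 : ℝ) (hB1 : phi 0 < Y0 ∧ Y0 < psi 0)
    (bp : ℝ → ℝ → ℝ) (c3 : ℝ) (hc3 : 0 < c3)
    (hB4deriv : ∀ t ∈ Set.Icc (0:ℝ) T, ∀ y : ℝ, phi t < y → y < psi t →
      HasDerivAt (fun x => b t x) (bp t y) y)
    (hB4cont : ContinuousOn (fun q : ℝ × ℝ => bp q.1 q.2)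
      {q : ℝ × ℝ | q.1 ∈ Set.Icc (0:ℝ) T ∧ phi q.1 < q.2 ∧ q.2 < psi q.1})
    (hB4lt : ∀ t ∈ Set.Icc (0:ℝ) T, ∀ y : ℝ, phi t < y → y < psi t → bp t y < c3)
    (Z : ℝ → ℝ) (Lam : ℝ) (hLam : 0 < Lam) (hZ0 : Z 0 = 0)
    (hZH : ∀ s ∈ Set.Icc (0:ℝ) T, ∀ t ∈ Set.Icc (0:ℝ) T, |Z t - Z s| ≤ Lam * |t - s| ^ lam)
    (Y : ℝ → ℝ) (hYc : ContinuousOn Y (Set.Icc (0:ℝ) T))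
    (hYsand : ∀ t ∈ Set.Icc (0:ℝ) T, phi t < Y t ∧ Y t < psi t)
    (hYeq : ∀ t ∈ Set.Icc (0:ℝ) T, Y t = Y0 + (∫ s in (0:ℝ)..t, b s (Y s)) + Z t)
    (Yh : ℕ → ℕ → ℝ) (hYh0 : ∀ N : ℕ, Yh N 0 = Y0)
    (hYhrec : ∀ N : ℕ, 0 < N → c3 * (T / (N : ℝ)) < 1 → ∀ k : ℕ, k < N →
      phi (((k : ℝ) + 1) * T / (N : ℝ)) < Yh N (k + 1) ∧
      Yh N (k + 1) < psi (((k : ℝ) + 1) * T / (N : ℝ)) ∧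
      Yh N (k + 1) = Yh N k + b (((k : ℝ) + 1) * T / (N : ℝ)) (Yh N (k + 1)) * (T / (N : ℝ))
        + (Z (((k : ℝ) + 1) * T / (N : ℝ)) - Z ((k : ℝ) * T / (N : ℝ))))
    :
    ∀ r : ℝ, 1 ≤ r → ∃ C : ℝ, 0 < C ∧
      ∀ N : ℕ, 0 < N → c3 * (T / (N : ℝ)) < 1 →
        ∀ k : ℕ, k ≤ N →
          |Y ((k : ℝ) * T / (N : ℝ)) - Yh N k| ^ r ≤ C * (T / (N : ℝ)) ^ (lam * r) := by
  obtain ⟨hlam0, hlam1⟩ := hlam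
  have hIccmem0 : (0:ℝ) ∈ Set.Icc (0:ℝ) T := ⟨le_refl 0, hT.le⟩
  have hIne : (Set.Icc (0:ℝ) T).Nonempty := ⟨0, hIccmem0⟩
  have hphic : ContinuousOn phi (Set.Icc (0:ℝ) T) := holder_cont' T lam K hlam0 phi hphiH
  have hpsic : ContinuousOn psi (Set.Icc (0:ℝ) T) := holder_cont' T lam K hlam0 psi hpsiH
  set g : ℝ → ℝ := fun s => b s (Y s) with hg_def
  -- continuity of g
  have hgc : ContinuousOn g (Set.Icc (0:ℝ) T) := by
    have hmap : Set.MapsTo (fun s : ℝ => (s, Y s)) (Set.Icc (0:ℝ) T)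
        {q : ℝ × ℝ | q.1 ∈ Set.Icc (0:ℝ) T ∧ phi q.1 < q.2 ∧ q.2 < psi q.1} := by
      intro s hs
      exact ⟨hs, (hYsand s hs).1, (hYsand s hs).2⟩
    exact hB2cont.comp (continuousOn_id.prodMk hYc) hmap
  have hgint : ∀ u ∈ Set.Icc (0:ℝ) T, ∀ v ∈ Set.Icc (0:ℝ) T,
      IntervalIntegrable g volume u v := by
    intro u hu v hv
    exact (hgc.mono (Set.uIcc_subset_Icc hu hv)).intervalIntegrable
  -- Y 0 = Y0
  have hY0 : Y 0 = Y0 := by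
    have := hYeq 0 hIccmem0
    simpa [hZ0] using this
  -- difference form of the equation
  have hYdiff : ∀ s ∈ Set.Icc (0:ℝ) T, ∀ t ∈ Set.Icc (0:ℝ) T,
      Y t = Y s + (∫ x in s..t, g x) + (Z t - Z s) := by
    intro s hs t ht
    have h1 := hYeq s hs
    have h2 := hYeq t ht
    have h3 : (∫ x in (0:ℝ)..s, g x) + (∫ x in s..t, g x) = ∫ x in (0:ℝ)..t, g x :=
      intervalIntegral.integral_add_adjacent_intervals (hgint 0 hIccmem0 s hs) (hgint s hs t ht)
    rw [hg_def] at h3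
    linarith [h3]
  -- bound on |g|
  obtain ⟨x0, hx0, hgmax⟩ := isCompact_Icc.exists_isMaxOn hIne hgc.abs
  set Mb := |g x0| with hMb_def
  have hMb0 : 0 ≤ Mb := abs_nonneg _
  have hMb : ∀ s ∈ Set.Icc (0:ℝ) T, |g s| ≤ Mb := fun s hs => hgmax hs
  -- Hölder continuity of Y
  set H := Mb * T ^ ((1:ℝ) - lam) + Lam with hH_def
  have hH0 : 0 ≤ H := by
    have : (0:ℝ) ≤ T ^ ((1:ℝ)-lam) := (Real.rpow_pos_of_pos hT _).le
    nlinarith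
  have hYH : ∀ s ∈ Set.Icc (0:ℝ) T, ∀ t ∈ Set.Icc (0:ℝ) T,
      |Y t - Y s| ≤ H * |t - s| ^ lam := by
    intro s hs t ht
    rcases eq_or_ne t s with rfl | hne
    · simp [Real.zero_rpow hlam0.ne']
    · have habs0 : 0 < |t - s| := abs_pos.mpr (sub_ne_zero.mpr hne)
      have habsT : |t - s| ≤ T := by
        rw [abs_sub_le_iff]; constructor <;> linarith [hs.1, hs.2, ht.1, ht.2]
      have h1 : |∫ x in s..t, g x| ≤ Mb * |t - s| := by
        have hb : ∀ x ∈ Set.uIoc s t, ‖g x‖ ≤ Mb := by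
          intro x hx
          rw [Set.mem_uIoc] at hx
          refine hMb x ?_
          rcases hx with ⟨h, h'⟩ | ⟨h, h'⟩ <;>
            exact ⟨by linarith [hs.1, ht.1], by linarith [hs.2, ht.2]⟩
        simpa [Real.norm_eq_abs] using intervalIntegral.norm_integral_le_of_norm_le_const hb
      have h2 : |t - s| ≤ T ^ ((1:ℝ)-lam) * |t - s| ^ lam := by
        have h3 : |t - s| ^ ((1:ℝ)-lam) ≤ T ^ ((1:ℝ)-lam) :=
          Real.rpow_le_rpow (abs_nonneg _) habsT (by linarith)
        calc |t - s| = |t - s| ^ (((1:ℝ)-lam)+lam) := by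
              rw [show ((1:ℝ)-lam)+lam = (1:ℝ) by ring, Real.rpow_one]
          _ = |t - s| ^ ((1:ℝ)-lam) * |t - s| ^ lam := Real.rpow_add habs0 _ _
          _ ≤ T ^ ((1:ℝ)-lam) * |t - s| ^ lam :=
              mul_le_mul_of_nonneg_right h3 (Real.rpow_nonneg (abs_nonneg _) _)
      have h4 := hZH s hs t ht
      have h5 := hYdiff s hs t ht
      have h6 : |Y t - Y s| ≤ |∫ x in s..t, g x| + |Z t - Z s| := by
        rw [h5]; calc |Y s + (∫ x in s..t, g x) + (Z t - Z s) - Y s|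
            = |(∫ x in s..t, g x) + (Z t - Z s)| := by ring_nf
          _ ≤ _ := abs_add_le _ _
      have h7 : Mb * |t - s| ≤ Mb * (T ^ ((1:ℝ)-lam) * |t - s| ^ lam) :=
        mul_le_mul_of_nonneg_left h2 hMb0
      calc |Y t - Y s| ≤ Mb * |t - s| + Lam * |t - s| ^ lam := by linarith
        _ ≤ Mb * (T ^ ((1:ℝ)-lam) * |t - s| ^ lam) + Lam * |t - s| ^ lam := by linarith
        _ = H * |t - s| ^ lam := by rw [hH_def]; ring
  -- uniform interior bound for Y
  obtain ⟨t0, ht0, hmin⟩ := isCompact_Icc.exists_isMinOn hIne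
    (continuous_min.comp_continuousOn ((hYc.sub hphic).prodMk (hpsic.sub hYc)))
  set ε0 := min (Y t0 - phi t0) (psi t0 - Y t0) with hε0_def
  have hε00 : 0 < ε0 :=
    lt_min (by linarith [(hYsand t0 ht0).1]) (by linarith [(hYsand t0 ht0).2])
  have hε0b : ∀ t ∈ Set.Icc (0:ℝ) T, ε0 ≤ Y t - phi t ∧ ε0 ≤ psi t - Y t := by
    intro t ht
    have h : min (Y t0 - phi t0) (psi t0 - Y t0) ≤ min (Y t - phi t) (psi t - Y t) := hmin ht
    rw [le_min_iff] at h
    exact ⟨h.1, h.2⟩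
  -- positivity of the sup
  set S := (⨆ t : Set.Icc (0:ℝ) T, |psi t.1 - phi t.1|) with hS_def
  have hSpos : 0 < S := by
    have hbdd : BddAbove (Set.range fun t : Set.Icc (0:ℝ) T => |psi t.1 - phi t.1|) := by
      have hc : ContinuousOn (fun t => |psi t - phi t|) (Set.Icc (0:ℝ) T) :=
        (hpsic.sub hphic).abs
      have h := (isCompact_Icc.image_of_continuousOn hc).bddAbove
      rwa [Set.image_eq_range] at h
    have h0 : |psi 0 - phi 0| ≤ S := le_ciSup hbdd (⟨0, hIccmem0⟩ : Set.Icc (0:ℝ) T)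
    have h1 : 0 < psi 0 - phi 0 := by linarith [hphipsi 0 hIccmem0]
    calc (0:ℝ) < psi 0 - phi 0 := h1
      _ ≤ |psi 0 - phi 0| := le_abs_self _
      _ ≤ S := h0
  set ε1 := min ε0 (min 1 (S/2)) / 2 with hε1_def
  have hε10 : 0 < ε1 := by
    have : 0 < min ε0 (min 1 (S/2)) := lt_min hε00 (lt_min one_pos (by linarith))
    linarith
  have hε1lt : ε1 < min 1 (S/2) := by
    have h1 : min ε0 (min 1 (S/2)) ≤ min 1 (S/2) := min_le_right _ _
    have h2 : 0 < min 1 (S/2) := lt_min one_pos (by linarith)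
    rw [hε1_def]; linarith
  have hε1ε0 : 2 * ε1 ≤ ε0 := by
    have := min_le_left ε0 (min 1 (S/2))
    rw [hε1_def]; linarith
  have hYint : ∀ t ∈ Set.Icc (0:ℝ) T, phi t + ε1 < Y t ∧ Y t < psi t - ε1 := by
    intro t ht
    obtain ⟨h1, h2⟩ := hε0b t ht
    constructor <;> linarith
  set L := c1 / ε1 ^ p with hL_def
  have hL0 : 0 < L := div_pos hc1 (Real.rpow_pos_of_pos hε10 p)
  set CR := L * (H + 1) with hCR_def
  have hCR0 : 0 < CR := mul_pos hL0 (by linarith)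
  -- Hölder continuity of g
  have hgH : ∀ s ∈ Set.Icc (0:ℝ) T, ∀ t ∈ Set.Icc (0:ℝ) T,
      |g s - g t| ≤ CR * |s - t| ^ lam := by
    intro s hs t ht
    obtain ⟨hs1, hs2⟩ := hYint s hs
    obtain ⟨ht1, ht2⟩ := hYint t ht
    have h1 := hB2lip ε1 hε10 hε1lt s hs t ht (Y s) (Y t) hs1 hs2 ht1 ht2
    have h2 : |Y s - Y t| ≤ H * |s - t| ^ lam := by
      have := hYH t ht s hs
      rwa [show |s - t| = |s - t| from rfl] at this
    have h3 : (0:ℝ) ≤ |s - t| ^ lam := Real.rpow_nonneg (abs_nonneg _) _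
    calc |g s - g t| = |b s (Y s) - b t (Y t)| := rfl
      _ ≤ c1 / ε1 ^ p * (|Y s - Y t| + |s - t| ^ lam) := h1
      _ = L * (|Y s - Y t| + |s - t| ^ lam) := by rw [hL_def]
      _ ≤ L * (H * |s - t| ^ lam + |s - t| ^ lam) := by
          apply mul_le_mul_of_nonneg_left _ hL0.le
          linarith
      _ = CR * |s - t| ^ lam := by rw [hCR_def]; ring
  -- one-sided Lipschitz property
  have hone : ∀ t ∈ Set.Icc (0:ℝ) T, ∀ u v : ℝ, phi t < u → u < psi t → phi t < v → v < psi t →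
      (b t u - b t v) * (u - v) ≤ c3 * (u - v) ^ 2 := by
    intro t ht u v hu1 hu2 hv1 hv2
    have hanti : StrictAntiOn (fun x => b t x - c3 * x) (Set.Ioo (phi t) (psi t)) := by
      apply strictAntiOn_of_deriv_neg (convex_Ioo _ _)
      · intro x hx
        have hd : HasDerivAt (fun x => b t x - c3 * x) (bp t x - c3 * 1) x :=
          (hB4deriv t ht x hx.1 hx.2).sub ((hasDerivAt_id x).const_mul c3)
        exact hd.continuousAt.continuousWithinAt
      · intro x hx
        rw [interior_Ioo] at hx
        have hd : HasDerivAt (fun x => b t x - c3 * x) (bp t x - c3 * 1) x :=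
          (hB4deriv t ht x hx.1 hx.2).sub ((hasDerivAt_id x).const_mul c3)
        rw [hd.deriv]
        have := hB4lt t ht x hx.1 hx.2
        linarith
    rcases lt_trichotomy u v with h | h | h
    · have h1 : b t v - c3 * v < b t u - c3 * u :=
        hanti (Set.mem_Ioo.mpr ⟨hu1, hu2⟩) (Set.mem_Ioo.mpr ⟨hv1, hv2⟩) h
      nlinarith [mul_pos (show (0:ℝ) < b t u - b t v - c3 * (u - v) by linarith)
        (show (0:ℝ) < v - u by linarith)]
    · subst h; simp
    · have h1 : b t u - c3 * u < b t v - c3 * v :=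
        hanti (Set.mem_Ioo.mpr ⟨hv1, hv2⟩) (Set.mem_Ioo.mpr ⟨hu1, hu2⟩) h
      nlinarith [mul_pos (show (0:ℝ) < b t v - b t u - c3 * (v - u) by linarith)
        (show (0:ℝ) < u - v by linarith)]
  -- gap bound
  set Mgap := psi 0 - phi 0 + 2 * K * T ^ lam with hMgap_def
  have hTlam0 : 0 < T ^ lam := Real.rpow_pos_of_pos hT _
  have hMgap0 : 0 < Mgap := by
    have := hphipsi 0 hIccmem0
    nlinarith
  have hMg : ∀ t ∈ Set.Icc (0:ℝ) T, psi t - phi t ≤ Mgap := by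
    intro t ht
    have h1 := hphiH 0 hIccmem0 t ht
    have h2 := hpsiH 0 hIccmem0 t ht
    have h3 : |t - 0| ^ lam ≤ T ^ lam := by
      apply Real.rpow_le_rpow (abs_nonneg _) _ hlam0.le
      rw [sub_zero, abs_of_nonneg ht.1]; exact ht.2
    have h4 : K * |t - 0| ^ lam ≤ K * T ^ lam := mul_le_mul_of_nonneg_left h3 hK.le
    have h5 := (abs_le.mp h1).2
    have h6 := (abs_le.mp h2).2
    have h5' := (abs_le.mp h1).1
    have h6' := (abs_le.mp h2).1
    rw [hMgap_def]
    nlinarith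
  intro r hr
  have hr0 : (0:ℝ) ≤ r := by linarith
  set C1 := CR * T * Real.exp (2 * c3 * T) with hC1_def
  have hC10 : 0 < C1 := by positivity
  set C2 := Mgap ^ r * (2 * c3) ^ (lam * r) with hC2_def
  refine ⟨max (C1 ^ r) C2, lt_of_lt_of_le (Real.rpow_pos_of_pos hC10 r) (le_max_left _ _), ?_⟩
  intro N hN hNc k hk
  have hNR : (0:ℝ) < (N:ℝ) := by exact_mod_cast hN
  set Δ := T / (N:ℝ) with hΔ_def
  have hΔ0 : 0 < Δ := div_pos hT hNR
  have hΔlam0 : 0 < Δ ^ lam := Real.rpow_pos_of_pos hΔ0 _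
  have hΔN : Δ * (N:ℝ) = T := by rw [hΔ_def]; field_simp
  have hP0 : 0 < 1 - c3 * Δ := by linarith
  have hP1 : 1 - c3 * Δ ≤ 1 := by nlinarith only [hc3, hΔ0]
  have tmem : ∀ j : ℕ, j ≤ N → (j:ℝ) * T / (N:ℝ) ∈ Set.Icc (0:ℝ) T := by
    intro j hj
    have hjR : (j:ℝ) ≤ (N:ℝ) := by exact_mod_cast hj
    constructor
    · positivity
    · rw [div_le_iff₀ hNR]
      nlinarith only [Nat.cast_nonneg (α := ℝ) j, hjR, hT]
  set A := CR * Δ * Δ ^ lam with hA_def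
  have hA0 : 0 ≤ A := by positivity
  have key : ∀ j : ℕ, j ≤ N →
      |Y ((j:ℝ) * T / (N:ℝ)) - Yh N j| * (1 - c3 * Δ) ^ j ≤ A * (j:ℝ) := by
    intro j
    induction j with
    | zero =>
      intro _
      simp [hYh0, hY0]
    | succ j ih =>
      intro hj1
      have hjN : j < N := Nat.lt_of_succ_le hj1
      have ihj := ih hjN.le
      set t : ℝ := (j:ℝ) * T / (N:ℝ) with ht_def
      set t' : ℝ := ((j:ℝ) + 1) * T / (N:ℝ) with ht'_def
      have htt' : t' = t + Δ := by
        rw [ht'_def, ht_def, hΔ_def]; field_simp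
      have hcast2 : (((j+1:ℕ)):ℝ) * T / (N:ℝ) = t' := by push_cast; rw [ht'_def]
      have htm : t ∈ Set.Icc (0:ℝ) T := tmem j hjN.le
      have ht'm : t' ∈ Set.Icc (0:ℝ) T := by
        have := tmem (j+1) hj1
        rwa [hcast2] at this
      obtain ⟨hv1, hv2, hveq⟩ := hYhrec N hN hNc j hjN
      have hu := hYsand t' ht'm
      have hYtt := hYdiff t htm t' ht'm
      set R := ∫ x in t..t', (g x - g t') with hR_def
      have hsplit : (∫ x in t..t', g x) = R + Δ * g t' := by
        rw [hR_def, intervalIntegral.integral_sub (hgint t htm t' ht'm) intervalIntegrable_const,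
          intervalIntegral.integral_const]
        have h : t' - t = Δ := by rw [htt']; ring
        rw [h, smul_eq_mul]; ring
      have hRb : |R| ≤ CR * Δ ^ lam * Δ := by
        have hb : ∀ x ∈ Set.uIoc t t', ‖g x - g t'‖ ≤ CR * Δ ^ lam := by
          intro x hx
          rw [Set.mem_uIoc] at hx
          have hxm : x ∈ Set.Icc (0:ℝ) T ∧ |x - t'| ≤ Δ := by
            rcases hx with ⟨h, h'⟩ | ⟨h, h'⟩
            · refine ⟨⟨by linarith only [h, htm.1], by linarith only [h', ht'm.2]⟩, ?_⟩
              rw [abs_le]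
              constructor
              · linarith only [h, htt']
              · linarith only [h', hΔ0]
            · refine ⟨⟨by linarith only [h, ht'm.1], by linarith only [h', htm.2]⟩, ?_⟩
              rw [abs_le]
              constructor
              · linarith only [h, hΔ0]
              · linarith only [h', htt', hΔ0]
          have h1 := hgH x hxm.1 t' ht'm
          have h2 : |x - t'| ^ lam ≤ Δ ^ lam :=
            Real.rpow_le_rpow (abs_nonneg _) hxm.2 hlam0.le
          rw [Real.norm_eq_abs]
          calc |g x - g t'| ≤ CR * |x - t'| ^ lam := h1
            _ ≤ CR * Δ ^ lam := mul_le_mul_of_nonneg_left h2 hCR0.le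
        have h3 := intervalIntegral.norm_integral_le_of_norm_le_const hb
        rw [Real.norm_eq_abs] at h3
        have h4 : |t' - t| = Δ := by rw [htt']; simp [abs_of_pos hΔ0]
        rw [h4] at h3
        exact h3
      set u := Y t' with hu_def
      set v := Yh N (j+1) with hv_def
      have hrec : u - v = (Y t - Yh N j) + R + Δ * (b t' u - b t' v) := by
        have h1 : u = Y t + (R + Δ * g t') + (Z t' - Z t) := by
          rw [hYtt, hsplit]
        have h2 : v = Yh N j + b t' v * Δ + (Z t' - Z t) := hveq
        have h3 : g t' = b t' u := rfl
        rw [h3] at h1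
        linarith only [h1, h2]
      have hos := hone t' ht'm u v hu.1 hu.2 hv1 hv2
      have hstep : |u - v| * (1 - c3 * Δ) ≤ |Y t - Yh N j| + |R| := by
        rcases eq_or_ne (u - v) 0 with h0 | h0
        · rw [h0]
          simp only [abs_zero, zero_mul]
          positivity
        · have habs : 0 < |u - v| := abs_pos.mpr h0
          have h1 : (u - v)^2 * (1 - c3 * Δ) ≤ (|Y t - Yh N j| + |R|) * |u - v| := by
            have e1 : (u - v)^2 = ((Y t - Yh N j) + R) * (u - v)
                + Δ * ((b t' u - b t' v) * (u - v)) := by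
              linear_combination (u - v) * hrec
            have e2 : Δ * ((b t' u - b t' v) * (u - v)) ≤ Δ * (c3 * (u - v)^2) :=
              mul_le_mul_of_nonneg_left hos hΔ0.le
            have e3 : ((Y t - Yh N j) + R) * (u - v) ≤ (|Y t - Yh N j| + |R|) * |u - v| := by
              calc ((Y t - Yh N j) + R) * (u - v) ≤ |((Y t - Yh N j) + R) * (u - v)| :=
                    le_abs_self _
                _ = |(Y t - Yh N j) + R| * |u - v| := abs_mul _ _
                _ ≤ (|Y t - Yh N j| + |R|) * |u - v| :=
                    mul_le_mul_of_nonneg_right (abs_add_le _ _) (abs_nonneg _)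
            linarith only [e1, e2, e3]
          nlinarith only [h1, sq_abs (u - v), habs, hP0]
      have hpow0 : (0:ℝ) ≤ (1 - c3 * Δ) ^ j := pow_nonneg hP0.le j
      have hpow1 : (1 - c3 * Δ) ^ j ≤ 1 := pow_le_one₀ hP0.le hP1
      rw [hcast2]
      calc |Y t' - Yh N (j+1)| * (1 - c3 * Δ) ^ (j+1)
          = (|u - v| * (1 - c3 * Δ)) * (1 - c3 * Δ) ^ j := by rw [pow_succ]; ring
        _ ≤ (|Y t - Yh N j| + |R|) * (1 - c3 * Δ) ^ j :=
            mul_le_mul_of_nonneg_right hstep hpow0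
        _ = |Y t - Yh N j| * (1 - c3 * Δ) ^ j + |R| * (1 - c3 * Δ) ^ j := by ring
        _ ≤ A * (j:ℝ) + A := by
            have h6 : |R| * (1 - c3 * Δ) ^ j ≤ |R| * 1 :=
              mul_le_mul_of_nonneg_left hpow1 (abs_nonneg _)
            have h7 : |R| * 1 ≤ A := by
              rw [mul_one, hA_def]
              calc |R| ≤ CR * Δ ^ lam * Δ := hRb
                _ = CR * Δ * Δ ^ lam := by ring
            linarith only [ihj, h6, h7]
        _ = A * ((j:ℝ) + 1) := by ring
        _ = A * (((j+1:ℕ)):ℝ) := by push_cast; ring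
  -- conclusion
  have hPN : 0 < (1 - c3 * Δ) ^ N := pow_pos hP0 N
  have hkey := key k hk
  have hkR : ((k:ℝ)) ≤ (N:ℝ) := by exact_mod_cast hk
  have hE0 : (0:ℝ) ≤ |Y ((k:ℝ) * T / (N:ℝ)) - Yh N k| := abs_nonneg _
  rcases le_or_gt (c3 * Δ) (1/2) with hhalf | hhalf
  · -- small step size
    have h1 : (1 - c3*Δ)^N ≤ (1 - c3*Δ)^k := pow_le_pow_of_le_one hP0.le hP1 hk
    have h2 : |Y ((k:ℝ) * T / (N:ℝ)) - Yh N k| * (1 - c3*Δ)^N ≤ A * (N:ℝ) :=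
      calc |Y ((k:ℝ) * T / (N:ℝ)) - Yh N k| * (1 - c3*Δ)^N
          ≤ |Y ((k:ℝ) * T / (N:ℝ)) - Yh N k| * (1 - c3*Δ)^k :=
            mul_le_mul_of_nonneg_left h1 hE0
        _ ≤ A * (k:ℝ) := hkey
        _ ≤ A * (N:ℝ) := mul_le_mul_of_nonneg_left hkR hA0
    have hq : (1:ℝ) ≤ (1 - c3*Δ) * Real.exp (2*(c3*Δ)) := by
      have ha : (0:ℝ) ≤ (1 - c3*Δ) * (Real.exp (2*(c3*Δ)) - (2*(c3*Δ)+1)) := by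
        apply mul_nonneg hP0.le
        have := Real.add_one_le_exp (2*(c3*Δ))
        linarith only [this]
      have hb : (0:ℝ) ≤ (c3*Δ) * (1 - 2*(c3*Δ)) := by
        apply mul_nonneg (mul_pos hc3 hΔ0).le
        linarith only [hhalf]
      nlinarith only [ha, hb]
    have h3 : (1:ℝ) ≤ (1-c3*Δ)^N * Real.exp (2*(c3*Δ))^N := by
      have h4 := pow_le_pow_left₀ (by norm_num : (0:ℝ) ≤ 1) hq N
      rw [one_pow, mul_pow] at h4
      exact h4
    have h5 : Real.exp (2*(c3*Δ))^N = Real.exp (2*c3*T) := by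
      rw [← Real.exp_nat_mul]
      congr 1
      rw [← hΔN]; ring
    have h6 : ((1-c3*Δ)^N)⁻¹ ≤ Real.exp (2*c3*T) := by
      rw [← h5, inv_eq_one_div, div_le_iff₀ hPN]
      linarith only [h3]
    have h7 : |Y ((k:ℝ) * T / (N:ℝ)) - Yh N k| ≤ C1 * Δ ^ lam := by
      have h8 : |Y ((k:ℝ) * T / (N:ℝ)) - Yh N k|
          = |Y ((k:ℝ) * T / (N:ℝ)) - Yh N k| * (1-c3*Δ)^N * ((1-c3*Δ)^N)⁻¹ := by
        rw [mul_assoc, mul_inv_cancel₀ hPN.ne', mul_one]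
      rw [h8]
      calc |Y ((k:ℝ) * T / (N:ℝ)) - Yh N k| * (1-c3*Δ)^N * ((1-c3*Δ)^N)⁻¹
          ≤ (A * (N:ℝ)) * Real.exp (2*c3*T) :=
            mul_le_mul h2 h6 (inv_nonneg.mpr hPN.le) (by positivity)
        _ = C1 * Δ ^ lam := by
            rw [hC1_def, hA_def, ← hΔN]; ring
    calc |Y ((k:ℝ) * T / (N:ℝ)) - Yh N k| ^ r ≤ (C1 * Δ^lam) ^ r :=
          Real.rpow_le_rpow hE0 h7 hr0
      _ = C1 ^ r * Δ ^ (lam * r) := by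
          rw [Real.mul_rpow hC10.le hΔlam0.le, ← Real.rpow_mul hΔ0.le]
      _ ≤ max (C1 ^ r) C2 * Δ ^ (lam*r) :=
          mul_le_mul_of_nonneg_right (le_max_left _ _) (Real.rpow_nonneg hΔ0.le _)
  · -- large step size
    have hE1 : |Y ((k:ℝ) * T / (N:ℝ)) - Yh N k| ≤ Mgap := by
      cases k with
      | zero => simpa [hY0, hYh0] using hMgap0.le
      | succ j =>
        have hjN : j < N := Nat.lt_of_succ_le hk
        obtain ⟨h1, h2, _⟩ := hYhrec N hN hNc j hjN
        have hcast2 : (((j+1:ℕ)):ℝ) * T / (N:ℝ) = ((j:ℝ)+1) * T / (N:ℝ) := by push_cast; ring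
        have hmem := tmem (j+1) hk
        have hsd := hYsand _ hmem
        have h3 := hMg _ hmem
        rw [hcast2] at hsd h3 ⊢
        rw [abs_le]
        constructor
        · linarith only [hsd.1, h2, h3]
        · linarith only [hsd.2, h1, h3]
    have h8 : (1:ℝ) ≤ (2*c3*Δ) ^ (lam*r) := by
      apply Real.one_le_rpow (by linarith only [hhalf]) (by positivity)
    have h9 : (2*c3*Δ)^(lam*r) = (2*c3)^(lam*r) * Δ^(lam*r) :=
      Real.mul_rpow (by positivity) hΔ0.le
    calc |Y ((k:ℝ) * T / (N:ℝ)) - Yh N k| ^ r ≤ Mgap ^ r :=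
          Real.rpow_le_rpow hE0 hE1 hr0
      _ = Mgap ^ r * 1 := (mul_one _).symm
      _ ≤ Mgap ^ r * ((2*c3)^(lam*r) * Δ^(lam*r)) := by
          apply mul_le_mul_of_nonneg_left _ (Real.rpow_nonneg hMgap0.le r)
          rw [← h9]; exact h8
      _ = C2 * Δ^(lam*r) := by rw [hC2_def]; ring
      _ ≤ max (C1^r) C2 * Δ^(lam*r) :=
          mul_le_mul_of_nonneg_right (le_max_right _ _) (Real.rpow_nonneg hΔ0.le _)
end

section
/- Under Assumptions (A1)–(A4), there exist constants L1, L2 > 0, depending only on Y(0), φ, the drift b (through c1, c2, p, y_*, γ), λ and T (not on Z, Λ or N), such that for every noise path Z with Hölder constant Λ and every N with c3·Δ_N < 1, the drift-implicit Euler scheme satisfies Ŷ(t_n) ≥ φ(t_n) + L1/(L2 + Λ)^{1/(γλ+λ−1)} for all n = 0,…,N. Moreover, there exist constants L3, L4 > 0, also depending only on Y(0), φ, b, λ and T, such that for every N additionally satisfying c1·Δ_N/(Y(0) − φ(0))^p < 1 one has Ŷ(t_n) ≤ L3 + L4·Λ for all n = 0,…,N. -/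
open MeasureTheory

lemma key_log (lam gam c2 M L1 c : ℝ)
    (hlam0 : 0 < lam) (hlam1 : lam < 1) (hg : 0 < gam*lam+lam-1)
    (hc2 : 0 < c2) (hM : 0 < M) (hL1 : 0 < L1)
    (hc : c = L1 / M ^ (1/(gam*lam+lam-1)))
    (hL1le : (gam*lam+lam-1) * Real.log L1 ≤ lam * (Real.log c2 - gam * Real.log 2)) :
    (M * (2*c)^gam / c2) ^ (1/(1-lam)) ≤ (c/M) ^ (1/lam) := by
  have h1m : (0:ℝ) < 1 - lam := by linarith
  have hMg : (0:ℝ) < M ^ (1/(gam*lam+lam-1)) := Real.rpow_pos_of_pos hM _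
  have hcpos : 0 < c := by rw [hc]; positivity
  have h2c : (0:ℝ) < 2*c := by linarith
  have hXb : (0:ℝ) < M * (2*c)^gam / c2 := by
    have := Real.rpow_pos_of_pos h2c gam; positivity
  have hYb : (0:ℝ) < c / M := by positivity
  set ℓc := Real.log c with hℓc
  set m := Real.log M with hm
  set ℓ1 := Real.log L1 with hℓ1
  set ℓ2 := Real.log c2 with hℓ2
  set ω := Real.log 2 with hω
  have h1 : (gam*lam+lam-1) * ℓc = (gam*lam+lam-1) * ℓ1 - m := by
    rw [hℓc, hc, Real.log_div hL1.ne' hMg.ne', Real.log_rpow hM]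
    rw [hℓ1, hm, mul_sub, ← mul_assoc, mul_one_div_cancel hg.ne', one_mul]
  have hkey2 : 0 ≤ (gam*lam+lam-1) * (lam*ℓ2 - lam*gam*ω - (gam*lam+lam-1)*ℓ1) :=
    mul_nonneg hg.le (by linarith)
  have hΔeq : (gam*lam+lam-1)*((1-lam)*(ℓc-m) - lam*(m+gam*(ω+ℓc)-ℓ2))
      = (gam*lam+lam-1)*(lam*ℓ2 - lam*gam*ω - (gam*lam+lam-1)*ℓ1)
        + (-(gam*lam+lam-1))*((gam*lam+lam-1) * ℓc - ((gam*lam+lam-1) * ℓ1 - m)) := by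
    ring
  have hΔ : 0 ≤ (gam*lam+lam-1)*((1-lam)*(ℓc-m) - lam*(m+gam*(ω+ℓc)-ℓ2)) := by
    rw [hΔeq]
    have : (gam*lam+lam-1) * ℓc - ((gam*lam+lam-1) * ℓ1 - m) = 0 := by rw [h1]; ring
    rw [this]
    linarith
  have key : lam*(m+gam*(ω+ℓc)-ℓ2) ≤ (1-lam)*(ℓc-m) := by
    nlinarith [hΔ, hg]
  have hlogX : Real.log ((M * (2*c)^gam / c2) ^ (1/(1-lam))) = (1/(1-lam)) * (m+gam*(ω+ℓc)-ℓ2) := by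
    rw [Real.log_rpow hXb, Real.log_div (by positivity) hc2.ne',
      Real.log_mul hM.ne' (Real.rpow_pos_of_pos h2c gam).ne', Real.log_rpow h2c,
      Real.log_mul two_ne_zero hcpos.ne']
  have hlogY : Real.log ((c/M) ^ (1/lam)) = (1/lam) * (ℓc - m) := by
    rw [Real.log_rpow hYb, Real.log_div hcpos.ne' hM.ne']
  have hlog : Real.log ((M * (2*c)^gam / c2) ^ (1/(1-lam))) ≤ Real.log ((c/M) ^ (1/lam)) := by
    rw [hlogX, hlogY, show (1/(1-lam)) * (m+gam*(ω+ℓc)-ℓ2) = (m+gam*(ω+ℓc)-ℓ2)/(1-lam) by ring,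
      show (1/lam) * (ℓc - m) = (ℓc-m)/lam by ring, div_le_div_iff₀ h1m hlam0]
    nlinarith [key]
  exact (Real.log_le_log_iff (Real.rpow_pos_of_pos hXb _) (Real.rpow_pos_of_pos hYb _)).mp hlog

lemma holder_drift (lam M β c s : ℝ) (hlam0 : 0 < lam) (hlam1 : lam < 1)
    (hM : 0 < M) (hβ : 0 < β) (hc : 0 < c) (hs : 0 < s)
    (hkey : (M/β)^(1/(1-lam)) ≤ (c/M)^(1/lam)) : M * s^lam ≤ c + β*s := by
  have h1m : (0:ℝ) < 1 - lam := by linarith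
  rcases le_or_gt s ((c/M)^(1/lam)) with hcase | hcase
  · have h1 : s^lam ≤ ((c/M)^(1/lam))^lam := Real.rpow_le_rpow hs.le hcase hlam0.le
    have h2 : ((c/M)^(1/lam))^lam = c/M := by
      rw [← Real.rpow_mul (by positivity), one_div, inv_mul_cancel₀ hlam0.ne', Real.rpow_one]
    have h3 : M * s^lam ≤ M * (c/M) := by
      apply mul_le_mul_of_nonneg_left _ hM.le
      rw [← h2]; exact h1
    have h4 : M * (c/M) = c := by field_simp
    nlinarith [mul_pos hβ hs]
  · have hle : (M/β)^(1/(1-lam)) ≤ s := le_trans hkey hcase.le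
    have h1 : ((M/β)^(1/(1-lam)))^(1-lam) ≤ s^(1-lam) :=
      Real.rpow_le_rpow (Real.rpow_nonneg (by positivity) _) hle h1m.le
    have h2 : ((M/β)^(1/(1-lam)))^(1-lam) = M/β := by
      rw [← Real.rpow_mul (by positivity), one_div, inv_mul_cancel₀ h1m.ne', Real.rpow_one]
    have h3 : M ≤ β * s^(1-lam) := by
      rw [h2] at h1
      rw [← div_le_iff₀' hβ]
      exact h1
    have h4 : s^(1-lam) * s^lam = s := by
      rw [← Real.rpow_add hs]; norm_num
    have h5 : M * s^lam ≤ (β * s^(1-lam)) * s^lam :=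
      mul_le_mul_of_nonneg_right h3 (Real.rpow_nonneg hs.le _)
    calc M * s^lam ≤ (β * s^(1-lam)) * s^lam := h5
      _ = β * s := by rw [mul_assoc, h4]
      _ ≤ c + β * s := by linarith

lemma deriv_bound (g gp : ℝ → ℝ) (c3 R y : ℝ)
    (hder : ∀ x, R ≤ x → HasDerivAt g (gp x) x)
    (hlt : ∀ x, R ≤ x → gp x < c3) (hRy : R ≤ y) :
    g y ≤ g R + c3 * (y - R) := by
  have hanti : StrictAntiOn (fun x => g x - c3 * x) (Set.Ici R) := by
    apply strictAntiOn_of_deriv_neg (convex_Ici R)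
    · intro x hx
      exact ((hder x hx).sub (by simpa using (hasDerivAt_id x).const_mul c3)).continuousAt.continuousWithinAt
    · intro x hx
      rw [interior_Ici] at hx
      have hD : HasDerivAt (fun x => g x - c3 * x) (gp x - c3) x :=
        (hder x hx.le).sub (by simpa using (hasDerivAt_id x).const_mul c3)
      rw [hD.deriv]
      linarith [hlt x hx.le]
  rcases eq_or_lt_of_le hRy with rfl | hlt'
  · simp
  · have := (hanti (Set.self_mem_Ici) (by exact hRy) hlt').le
    simp only at this
    linarith

set_option maxHeartbeats 1600000 in
set_option maxRecDepth 8000 in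
theorem stmt_13
    (T lam : ℝ) (hT : 0 < T) (hlam : lam ∈ Set.Ioo (0:ℝ) 1)
    (phi : ℝ → ℝ) (K : ℝ) (hK : 0 < K)
    (hphiH : ∀ s ∈ Set.Icc (0:ℝ) T, ∀ t ∈ Set.Icc (0:ℝ) T, |phi t - phi s| ≤ K * |t - s| ^ lam)
    (b : ℝ → ℝ → ℝ) (c1 p c2 ystar gam : ℝ)
    (hc1 : 0 < c1) (hp : 1 < p) (hc2 : 0 < c2) (hystar : 0 < ystar)
    (hgam : 1 / lam - 1 < gam)
    (hA2cont : ContinuousOn (fun q : ℝ × ℝ => b q.1 q.2)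
      {q : ℝ × ℝ | q.1 ∈ Set.Icc (0:ℝ) T ∧ phi q.1 < q.2})
    (hA2lip : ∀ ε : ℝ, 0 < ε → ε < 1 →
      ∀ t1 ∈ Set.Icc (0:ℝ) T, ∀ t2 ∈ Set.Icc (0:ℝ) T, ∀ y1 y2 : ℝ,
        phi t1 + ε < y1 → phi t2 + ε < y2 →
        |b t1 y1 - b t2 y2| ≤ c1 / ε ^ p * (|y1 - y2| + |t1 - t2| ^ lam))
    (hA3 : ∀ t ∈ Set.Icc (0:ℝ) T, ∀ y : ℝ, phi t < y → y ≤ phi t + ystar →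
      c2 / (y - phi t) ^ gam ≤ b t y)
    (Y0 : ℝ) (hA1 : phi 0 < Y0)
    (bp : ℝ → ℝ → ℝ) (c3 : ℝ) (hc3 : 0 < c3)
    (hA4deriv : ∀ t ∈ Set.Icc (0:ℝ) T, ∀ y : ℝ, phi t < y →
      HasDerivAt (fun x => b t x) (bp t y) y)
    (hA4cont : ContinuousOn (fun q : ℝ × ℝ => bp q.1 q.2)
      {q : ℝ × ℝ | q.1 ∈ Set.Icc (0:ℝ) T ∧ phi q.1 < q.2})
    (hA4lt : ∀ t ∈ Set.Icc (0:ℝ) T, ∀ y : ℝ, phi t < y → bp t y < c3)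
    :
    (∃ L1 L2 : ℝ, 0 < L1 ∧ 0 < L2 ∧
      ∀ (Z : ℝ → ℝ) (Lam : ℝ), 0 < Lam → Z 0 = 0 →
        (∀ s ∈ Set.Icc (0:ℝ) T, ∀ t ∈ Set.Icc (0:ℝ) T, |Z t - Z s| ≤ Lam * |t - s| ^ lam) →
        ∀ N : ℕ, 0 < N → c3 * (T / (N : ℝ)) < 1 →
        ∀ Yh : ℕ → ℝ, Yh 0 = Y0 →
          (∀ k : ℕ, k < N →
            phi (((k : ℝ) + 1) * T / (N : ℝ)) < Yh (k + 1) ∧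
            Yh (k + 1) = Yh k + b (((k : ℝ) + 1) * T / (N : ℝ)) (Yh (k + 1)) * (T / (N : ℝ))
              + (Z (((k : ℝ) + 1) * T / (N : ℝ)) - Z ((k : ℝ) * T / (N : ℝ)))) →
          ∀ n : ℕ, n ≤ N →
            phi ((n : ℝ) * T / (N : ℝ)) + L1 / (L2 + Lam) ^ (1 / (gam * lam + lam - 1)) ≤ Yh n) ∧
    (∃ L3 L4 : ℝ, 0 < L3 ∧ 0 < L4 ∧
      ∀ (Z : ℝ → ℝ) (Lam : ℝ), 0 < Lam → Z 0 = 0 →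
        (∀ s ∈ Set.Icc (0:ℝ) T, ∀ t ∈ Set.Icc (0:ℝ) T, |Z t - Z s| ≤ Lam * |t - s| ^ lam) →
        ∀ N : ℕ, 0 < N → c3 * (T / (N : ℝ)) < 1 → c1 * (T / (N : ℝ)) / (Y0 - phi 0) ^ p < 1 →
        ∀ Yh : ℕ → ℝ, Yh 0 = Y0 →
          (∀ k : ℕ, k < N →
            phi (((k : ℝ) + 1) * T / (N : ℝ)) < Yh (k + 1) ∧
            Yh (k + 1) = Yh k + b (((k : ℝ) + 1) * T / (N : ℝ)) (Yh (k + 1)) * (T / (N : ℝ))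
              + (Z (((k : ℝ) + 1) * T / (N : ℝ)) - Z ((k : ℝ) * T / (N : ℝ)))) →
          ∀ n : ℕ, n ≤ N → Yh n ≤ L3 + L4 * Lam) := by
  obtain ⟨hlam0, hlam1⟩ := hlam
  have h1m : (0:ℝ) < 1 - lam := by linarith
  have hgam0 : 0 < gam := by
    have h := one_lt_one_div hlam0 hlam1
    linarith
  have hg : 0 < gam*lam+lam-1 := by
    have h' : (1/lam - 1) * lam < gam * lam := mul_lt_mul_of_pos_right hgam hlam0
    have h'' : (1/lam - 1) * lam = 1 - lam := by field_simp
    linarith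
  obtain ⟨d, hddef⟩ : ∃ x : ℝ, x = Y0 - phi 0 := ⟨_, rfl⟩
  have hd : 0 < d := by rw [hddef]; linarith
  constructor
  · -- LOWER BOUND
    set α := 1/(gam*lam+lam-1) with hαdef
    have hα : 0 < α := by positivity
    set L1a := Real.exp ((lam/(gam*lam+lam-1)) * (Real.log c2 - gam*Real.log 2)) with hL1adef
    set L1 := min L1a (min ((ystar/2)*K^α) ((d/2)*K^α)) with hL1def
    have hKα : (0:ℝ) < K^α := Real.rpow_pos_of_pos hK _
    have hL1pos : 0 < L1 := by
      apply lt_min (Real.exp_pos _)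
      apply lt_min <;> positivity
    refine ⟨L1, K, hL1pos, hK, ?_⟩
    intro Z Lam hLam hZ0 hZH N hN hc3N Yh hYh0 hstep
    set M := K + Lam with hMdef
    have hM : 0 < M := by positivity
    have hMα : (0:ℝ) < M^α := Real.rpow_pos_of_pos hM _
    set c := L1 / M ^ α with hcdef
    have hc : 0 < c := by positivity
    have hKM : K/M ≤ 1 := by
      rw [div_le_one hM]; linarith
    have hKMα : K^α/M^α ≤ 1 := by
      rw [← Real.div_rpow hK.le hM.le]
      exact Real.rpow_le_one (by positivity) hKM hα.le
    have hcb : ∀ u : ℝ, 0 < u → L1 ≤ (u/2)*K^α → 2*c ≤ u := by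
      intro u hu hLe
      have h1 : c ≤ ((u/2)*K^α)/M^α := by
        rw [hcdef]
        gcongr
      have h2 : ((u/2)*K^α)/M^α = (u/2)*(K^α/M^α) := by ring
      have h3 : (u/2)*(K^α/M^α) ≤ (u/2)*1 := by
        apply mul_le_mul_of_nonneg_left hKMα (by linarith)
      linarith
    have h2cy : 2*c ≤ ystar := hcb ystar hystar ((min_le_right _ _).trans (min_le_left _ _))
    have h2cd : 2*c ≤ d := hcb d hd ((min_le_right _ _).trans (min_le_right _ _))
    have hL1le : (gam*lam+lam-1) * Real.log L1 ≤ lam * (Real.log c2 - gam * Real.log 2) := by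
      have h1 : Real.log L1 ≤ Real.log L1a := by
        apply Real.log_le_log hL1pos (min_le_left _ _)
      rw [hL1adef, Real.log_exp] at h1
      have h2 : (gam*lam+lam-1) * ((lam/(gam*lam+lam-1)) * (Real.log c2 - gam*Real.log 2))
          = lam * (Real.log c2 - gam*Real.log 2) := by
          rw [← mul_assoc, mul_div_assoc', mul_div_cancel_left₀ _ hg.ne']
      nlinarith [mul_le_mul_of_nonneg_left h1 hg.le]
    have hkey0 := key_log lam gam c2 M L1 c hlam0 hlam1 hg hc2 hM hL1pos (by rw [hcdef, hαdef]) hL1le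
    set β := c2 / (2*c)^gam with hβdef
    have h2cpos : (0:ℝ) < 2*c := by linarith
    have h2cγ : (0:ℝ) < (2*c)^gam := Real.rpow_pos_of_pos h2cpos _
    have hβ : 0 < β := by positivity
    have hkey : (M/β)^(1/(1-lam)) ≤ (c/M)^(1/lam) := by
      have h : M/β = M * (2*c)^gam / c2 := by rw [hβdef]; field_simp
      rw [h]; exact hkey0
    have hNpos : (0:ℝ) < (N:ℝ) := by exact_mod_cast hN
    set Δ := T/(N:ℝ) with hΔdef
    have hΔ : 0 < Δ := by positivity
    have hgrid : ∀ i:ℕ, i ≤ N → (i:ℝ)*T/(N:ℝ) ∈ Set.Icc (0:ℝ) T := by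
      intro i hi
      have hiR : (i:ℝ) ≤ (N:ℝ) := by exact_mod_cast hi
      constructor
      · positivity
      · rw [div_le_iff₀ hNpos]
        have := mul_le_mul_of_nonneg_left hiR hT.le
        linarith
    set D := fun n : ℕ => Yh n - phi ((n:ℝ)*T/(N:ℝ)) with hDdef
    have hD0 : D 0 = d := by
      simp only [hDdef, hYh0, Nat.cast_zero, zero_mul, zero_div, hddef]
    have hDpos : ∀ i:ℕ, 1 ≤ i → i ≤ N → 0 < D i := by
      intro i h1 h2
      obtain ⟨k, rfl⟩ : ∃ k, i = k+1 := ⟨i-1, by omega⟩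
      have h3 := (hstep k (by omega)).1
      have hcast : (((k+1:ℕ)):ℝ)*T/(N:ℝ) = ((k:ℝ)+1)*T/(N:ℝ) := by push_cast; ring
      simp only [hDdef]
      rw [hcast]
      linarith
    have htele : ∀ j n : ℕ, j ≤ n → n ≤ N → (∀ i, j < i → i ≤ n → D i < 2*c) → 2*c ≤ D j → c ≤ D n := by
      intro j n hjn hnN hsmall hDj
      rcases eq_or_lt_of_le hjn with rfl | hjlt
      · linarith
      have hbge : ∀ i, j < i → i ≤ n → β ≤ b ((i:ℝ)*T/(N:ℝ)) (Yh i) := by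
        intro i hji hin
        have hiN : i ≤ N := le_trans hin hnN
        have hDipos : 0 < D i := hDpos i (by omega) hiN
        have hDi2c : D i < 2*c := hsmall i hji hin
        simp only [hDdef] at hDipos hDi2c
        have hA3i := hA3 _ (hgrid i hiN) (Yh i) (by linarith) (by linarith)
        refine le_trans ?_ hA3i
        rw [hβdef]
        have hb1 : (Yh i - phi ((i:ℝ)*T/(N:ℝ)))^gam ≤ (2*c)^gam :=
          Real.rpow_le_rpow (by linarith) (by linarith) hgam0.le
        have hb2 : (0:ℝ) < (Yh i - phi ((i:ℝ)*T/(N:ℝ)))^gam := Real.rpow_pos_of_pos (by linarith) _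
        gcongr
      have aux : ∀ m:ℕ, j + m ≤ n →
          Yh j + (m:ℝ)*β*Δ + (Z (((j+m:ℕ):ℝ)*T/(N:ℝ)) - Z ((j:ℝ)*T/(N:ℝ))) ≤ Yh (j+m) := by
        intro m
        induction m with
        | zero => intro _; simp
        | succ m ih =>
          intro hle
          have ih' := ih (by omega)
          obtain ⟨_, heq⟩ := hstep (j+m) (by omega)
          have hb := hbge (j+m+1) (by omega) (by omega)
          have hbΔ := mul_le_mul_of_nonneg_right hb hΔ.le
          rw [show j + (m+1) = (j+m)+1 from rfl]
          push_cast at heq hb hbΔ ih' ⊢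
          linarith
      have hnj : j + (n-j) = n := by omega
      have haux := aux (n-j) (by omega)
      rw [hnj] at haux
      set s := ((n-j:ℕ):ℝ)*Δ with hsdef
      have hnjpos : (0:ℝ) < ((n-j:ℕ):ℝ) := by
        have : 0 < n - j := by omega
        exact_mod_cast this
      have hs : 0 < s := mul_pos hnjpos hΔ
      have hts : (n:ℝ)*T/(N:ℝ) - (j:ℝ)*T/(N:ℝ) = s := by
        rw [hsdef, hΔdef, Nat.cast_sub hjn]
        field_simp
      have hgj := hgrid j (le_trans hjn hnN)
      have hgn := hgrid n hnN
      have hZb : |Z ((n:ℝ)*T/(N:ℝ)) - Z ((j:ℝ)*T/(N:ℝ))| ≤ Lam * s^lam := by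
        have h := hZH _ hgj _ hgn
        rwa [show (n:ℝ)*T/(N:ℝ) - (j:ℝ)*T/(N:ℝ) = s from hts, abs_of_pos hs] at h
      have hφb : |phi ((n:ℝ)*T/(N:ℝ)) - phi ((j:ℝ)*T/(N:ℝ))| ≤ K * s^lam := by
        have h := hphiH _ hgj _ hgn
        rwa [show (n:ℝ)*T/(N:ℝ) - (j:ℝ)*T/(N:ℝ) = s from hts, abs_of_pos hs] at h
      have hMs : M*s^lam ≤ c + β*s := holder_drift lam M β c s hlam0 hlam1 hM hβ hc hs hkey
      have hprod : ((n-j:ℕ):ℝ)*β*Δ = β*s := by rw [hsdef]; ring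
      rw [hprod] at haux
      have hdist : M*s^lam = K*s^lam + Lam*s^lam := by rw [hMdef]; ring
      simp only [hDdef] at hDj ⊢
      have hZ1 := (abs_le.mp hZb).1
      have hφ1 := (abs_le.mp hφb).2
      linarith
    have hchain : ∀ n : ℕ, ∃ j, j ≤ n ∧ 2*c ≤ D j ∧ ∀ i, j < i → i ≤ n → D i < 2*c := by
      intro n
      induction n with
      | zero =>
        refine ⟨0, le_refl _, by rw [hD0]; exact h2cd, fun i h1 h2 => ?_⟩
        exact absurd h1 (by omega)
      | succ n ih =>
        rcases le_or_gt (2*c) (D (n+1)) with h|h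
        · exact ⟨n+1, le_refl _, h, fun i h1 h2 => absurd h1 (by omega)⟩
        · obtain ⟨j, hj1, hj2, hj3⟩ := ih
          refine ⟨j, by omega, hj2, fun i h1 h2 => ?_⟩
          rcases Nat.eq_or_lt_of_le h2 with heq|h2'
          · rw [heq]; exact h
          · exact hj3 i h1 (by omega)
    intro n hn
    obtain ⟨j, hj1, hj2, hj3⟩ := hchain n
    have hfin := htele j n hj1 hn hj3 hj2
    simp only [hDdef] at hfin
    linarith
  · -- UPPER BOUND
    have hmind : 0 < min d 1 := lt_min hd one_pos
    obtain ⟨ε, hεdef⟩ : ∃ x : ℝ, x = min d 1 / 2 := ⟨_, rfl⟩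
    have hε0 : 0 < ε := by rw [hεdef]; linarith only [hmind]
    have hε1 : ε < 1 := by
      have h := min_le_right d 1
      rw [hεdef]; linarith only [h]
    have hεd : ε < d := by
      have h := min_le_left d 1
      rw [hεdef]; linarith only [h, hmind]
    have hεp : (0:ℝ) < ε^p := Real.rpow_pos_of_pos hε0 _
    have hTlam : (0:ℝ) < T^lam := Real.rpow_pos_of_pos hT _
    obtain ⟨B, hBdef⟩ : ∃ x : ℝ, x = b 0 (phi 0 + d) + (c1/ε^p) * ((K+1) * T^lam) := ⟨_, rfl⟩
    obtain ⟨δ0, hδ0def⟩ : ∃ x : ℝ, x = 1 - c3*T/((⌊c3*T⌋₊:ℝ)+1) := ⟨_, rfl⟩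
    have hfl : c3*T < (⌊c3*T⌋₊:ℝ)+1 := Nat.lt_floor_add_one _
    have hflpos : (0:ℝ) < (⌊c3*T⌋₊:ℝ)+1 := by positivity
    have hδ0 : 0 < δ0 := by
      rw [hδ0def, sub_pos, div_lt_one hflpos]; exact hfl
    have hδ0le1 : δ0 ≤ 1 := by
      have h : 0 ≤ c3*T/((⌊c3*T⌋₊:ℝ)+1) := by positivity
      rw [hδ0def]; linarith only [h]
    obtain ⟨E, hEdef⟩ : ∃ x : ℝ, x = Real.exp (c3*T/δ0) := ⟨_, rfl⟩
    have hE1 : 1 ≤ E := by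
      rw [hEdef]
      calc (1:ℝ) = Real.exp 0 := Real.exp_zero.symm
        _ ≤ Real.exp (c3*T/δ0) := Real.exp_le_exp.mpr (by positivity)
    obtain ⟨C0, hC0def⟩ : ∃ x : ℝ,
        x = max Y0 0 + |phi 0| + K*T^lam + d + (max B 0 + c3*(|phi 0| + K*T^lam))*T := ⟨_, rfl⟩
    obtain ⟨C1, hC1def⟩ : ∃ x : ℝ, x = T^lam + c3*(T^lam*T) := ⟨_, rfl⟩
    have hmB : (0:ℝ) ≤ max B 0 := le_max_right _ _
    have hmY : (0:ℝ) ≤ max Y0 0 := le_max_right _ _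
    have habsphi : (0:ℝ) ≤ |phi 0| := abs_nonneg _
    have hC0pos : 0 < C0 := by
      have h1 : 0 ≤ (max B 0 + c3*(|phi 0| + K*T^lam))*T :=
        mul_nonneg (add_nonneg hmB (by positivity)) hT.le
      have h2 : 0 < K*T^lam := mul_pos hK hTlam
      rw [hC0def]; linarith only [h1, h2, hmY, habsphi, hd]
    have hC1pos : 0 < C1 := by rw [hC1def]; positivity
    have hEpos : (0:ℝ) < E := lt_of_lt_of_le one_pos hE1
    have hEC0 := mul_pos hEpos hC0pos
    have hEC1 := mul_pos hEpos hC1pos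
    refine ⟨E*C0 + 1, E*C1 + T^lam, by linarith only [hEC0], by linarith only [hEC1, hTlam], ?_⟩
    intro Z Lam hLam hZ0 hZH N hN hc3N hc1N Yh hYh0 hstep
    have hNpos : (0:ℝ) < (N:ℝ) := by exact_mod_cast hN
    obtain ⟨Δ, hΔdef⟩ : ∃ x : ℝ, x = T/(N:ℝ) := ⟨_, rfl⟩
    have hΔ : 0 < Δ := by rw [hΔdef]; positivity
    have hc3Δ : c3*Δ < 1 := by rw [hΔdef]; exact hc3N
    have h1c3 : 0 < 1 - c3*Δ := by linarith only [hc3Δ]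
    have hc3Δ0 : (0:ℝ) ≤ c3*Δ := mul_nonneg hc3.le hΔ.le
    have hNge : ((⌊c3*T⌋₊:ℝ)+1) ≤ (N:ℝ) := by
      have h1 : c3*T < (N:ℝ) := by
        have h := hc3N
        rw [← mul_div_assoc] at h
        exact (div_lt_one hNpos).mp h
      have h2 : ⌊c3*T⌋₊ < N := (Nat.floor_lt (by positivity)).mpr h1
      exact_mod_cast h2
    have hδ0le : δ0 ≤ 1 - c3*Δ := by
      have h : c3*Δ ≤ c3*T/((⌊c3*T⌋₊:ℝ)+1) := by
        rw [hΔdef, ← mul_div_assoc]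
        gcongr
      rw [hδ0def]; linarith only [h]
    have hr : 1/(1-c3*Δ) ≤ Real.exp (c3*Δ/δ0) := by
      have h1 : 1/(1-c3*Δ) ≤ 1 + c3*Δ/δ0 := by
        rw [div_le_iff₀ h1c3]
        have hx : c3*Δ ≤ 1 - δ0 := by linarith only [hδ0le]
        have expand : (1 + c3*Δ/δ0)*(1-c3*Δ) - 1 = (c3*Δ)*((1-δ0-c3*Δ)/δ0) := by
          field_simp
          ring
        linarith only [expand,
          mul_nonneg hc3Δ0 (div_nonneg (by linarith only [hx] : (0:ℝ) ≤ 1-δ0-c3*Δ) hδ0.le)]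
      calc 1/(1-c3*Δ) ≤ 1 + c3*Δ/δ0 := h1
        _ ≤ Real.exp (c3*Δ/δ0) := by linarith only [Real.add_one_le_exp (c3*Δ/δ0)]
    obtain ⟨P, hPdef⟩ : ∃ x : ℝ, x = |phi 0| + K*T^lam + d + Lam*T^lam := ⟨_, rfl⟩
    obtain ⟨Q, hQdef⟩ : ∃ x : ℝ, x = max Y0 0 + P := ⟨_, rfl⟩
    obtain ⟨B', hB'def⟩ : ∃ x : ℝ, x = max B 0 + c3*(Lam*T^lam + |phi 0| + K*T^lam) := ⟨_, rfl⟩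
    have hPpos : 0 < P := by
      rw [hPdef]
      have h1 : 0 < K*T^lam := mul_pos hK hTlam
      have h2 : 0 < Lam*T^lam := mul_pos hLam hTlam
      linarith only [h1, h2, habsphi, hd]
    have hQpos : 0 < Q := by rw [hQdef]; linarith only [hmY, hPpos]
    have hB'pos : 0 < B' := by
      have h : 0 < c3*(Lam*T^lam + |phi 0| + K*T^lam) := by positivity
      rw [hB'def]; linarith only [h, hmB]
    have hgrid : ∀ i:ℕ, i ≤ N → (i:ℝ)*T/(N:ℝ) ∈ Set.Icc (0:ℝ) T := by
      intro i hi
      have hiR : (i:ℝ) ≤ (N:ℝ) := by exact_mod_cast hi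
      constructor
      · positivity
      · rw [div_le_iff₀ hNpos]
        have h := mul_le_mul_of_nonneg_left hiR hT.le
        linarith only [h]
    have hZbd : ∀ i:ℕ, i ≤ N → |Z ((i:ℝ)*T/(N:ℝ))| ≤ Lam * T^lam := by
      intro i hi
      have h := hZH 0 ⟨le_refl 0, hT.le⟩ _ (hgrid i hi)
      rw [hZ0, sub_zero] at h
      refine h.trans ?_
      have habs : |(i:ℝ)*T/(N:ℝ) - 0| ≤ T := by
        rw [sub_zero, abs_of_nonneg (hgrid i hi).1]
        exact (hgrid i hi).2
      have h2 : |(i:ℝ)*T/(N:ℝ) - 0|^lam ≤ T^lam :=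
        Real.rpow_le_rpow (abs_nonneg _) habs hlam0.le
      exact mul_le_mul_of_nonneg_left h2 hLam.le
    have hφabs : ∀ i:ℕ, i ≤ N → |phi ((i:ℝ)*T/(N:ℝ))| ≤ |phi 0| + K*T^lam := by
      intro i hi
      have h := hphiH 0 ⟨le_refl 0, hT.le⟩ _ (hgrid i hi)
      have habs : |(i:ℝ)*T/(N:ℝ) - 0| ≤ T := by
        rw [sub_zero, abs_of_nonneg (hgrid i hi).1]
        exact (hgrid i hi).2
      have h2 : |(i:ℝ)*T/(N:ℝ) - 0|^lam ≤ T^lam :=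
        Real.rpow_le_rpow (abs_nonneg _) habs hlam0.le
      have h3 : |phi ((i:ℝ)*T/(N:ℝ)) - phi 0| ≤ K*T^lam :=
        h.trans (mul_le_mul_of_nonneg_left h2 hK.le)
      have h4 := abs_sub_abs_le_abs_sub (phi ((i:ℝ)*T/(N:ℝ))) (phi 0)
      linarith only [h3, h4]
    have hBbd : ∀ i:ℕ, i ≤ N → b ((i:ℝ)*T/(N:ℝ)) (phi ((i:ℝ)*T/(N:ℝ)) + d) ≤ B := by
      intro i hi
      have h := hA2lip ε hε0 hε1 _ (hgrid i hi) 0 ⟨le_refl 0, hT.le⟩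
        (phi ((i:ℝ)*T/(N:ℝ)) + d) (phi 0 + d) (by linarith only [hεd]) (by linarith only [hεd])
      have hφ : |phi ((i:ℝ)*T/(N:ℝ)) + d - (phi 0 + d)| = |phi ((i:ℝ)*T/(N:ℝ)) - phi 0| := by
        ring_nf
      have habs : |(i:ℝ)*T/(N:ℝ) - 0| ≤ T := by
        rw [sub_zero, abs_of_nonneg (hgrid i hi).1]
        exact (hgrid i hi).2
      have ht2 : |(i:ℝ)*T/(N:ℝ) - 0|^lam ≤ T^lam :=
        Real.rpow_le_rpow (abs_nonneg _) habs hlam0.le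
      have hφ2 : |phi ((i:ℝ)*T/(N:ℝ)) - phi 0| ≤ K*T^lam := by
        have h' := hphiH 0 ⟨le_refl 0, hT.le⟩ _ (hgrid i hi)
        exact h'.trans (mul_le_mul_of_nonneg_left ht2 hK.le)
      have hc1p : (0:ℝ) ≤ c1/ε^p := by positivity
      have h5 : c1/ε^p * (|phi ((i:ℝ)*T/(N:ℝ)) + d - (phi 0 + d)| + |(i:ℝ)*T/(N:ℝ) - 0|^lam)
          ≤ c1/ε^p * ((K+1)*T^lam) := by
        apply mul_le_mul_of_nonneg_left _ hc1p
        rw [hφ]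
        linarith only [hφ2, ht2]
      have h6 := (le_abs_self (b ((i:ℝ)*T/(N:ℝ)) (phi ((i:ℝ)*T/(N:ℝ)) + d) - b 0 (phi 0 + d))).trans h
      rw [hBdef]
      linarith only [h5, h6]
    have claim : ∀ n:ℕ, n ≤ N →
        (1-c3*Δ)^n * (Yh n - Z ((n:ℝ)*T/(N:ℝ))) ≤ Q + (n:ℝ)*(B'*Δ) := by
      intro n
      induction n with
      | zero =>
        intro _
        have hz : ((0:ℕ):ℝ)*T/(N:ℝ) = 0 := by norm_num
        rw [hz, hZ0, hYh0]
        simp only [pow_zero, one_mul, Nat.cast_zero, zero_mul, add_zero]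
        have h := le_max_left Y0 0
        rw [hQdef]
        linarith only [h, hPpos]
      | succ n ih =>
        intro hn1
        have hnN : n ≤ N := by omega
        have ih' := ih hnN
        obtain ⟨hpos, heq⟩ := hstep n (by omega)
        rw [← hΔdef] at heq
        have hcast : (((n+1:ℕ)):ℝ)*T/(N:ℝ) = ((n:ℝ)+1)*T/(N:ℝ) := by push_cast; ring
        have hgt' : ((n:ℝ)+1)*T/(N:ℝ) ∈ Set.Icc (0:ℝ) T := by rw [← hcast]; exact hgrid (n+1) hn1
        have hZt' : |Z (((n:ℝ)+1)*T/(N:ℝ))| ≤ Lam*T^lam := by rw [← hcast]; exact hZbd (n+1) hn1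
        have hφt' : |phi (((n:ℝ)+1)*T/(N:ℝ))| ≤ |phi 0| + K*T^lam := by
          rw [← hcast]; exact hφabs (n+1) hn1
        have hpow_pos : (0:ℝ) < (1-c3*Δ)^(n+1) := pow_pos h1c3 _
        have hpow_le1 : (1-c3*Δ)^(n+1) ≤ 1 := pow_le_one₀ h1c3.le (by linarith only [hc3Δ0])
        have hpow_le1' : (1-c3*Δ)^n ≤ 1 := pow_le_one₀ h1c3.le (by linarith only [hc3Δ0])
        have hQB : (0:ℝ) ≤ Q + ((n:ℝ)+1)*(B'*Δ) := by
          have h : (0:ℝ) ≤ ((n:ℝ)+1)*(B'*Δ) :=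
            mul_nonneg (by positivity) (mul_nonneg hB'pos.le hΔ.le)
          linarith only [h, hQpos]
        rw [hcast]
        push_cast
        rcases le_or_gt (Yh (n+1)) (phi (((n:ℝ)+1)*T/(N:ℝ)) + d) with hsm | hbig
        · have hG : Yh (n+1) - Z (((n:ℝ)+1)*T/(N:ℝ)) ≤ P := by
            have h1 := (abs_le.mp hZt').1
            have h2 := (le_abs_self (phi (((n:ℝ)+1)*T/(N:ℝ)))).trans hφt'
            rw [hPdef]
            linarith only [h1, h2, hsm]
          rcases le_or_gt (Yh (n+1) - Z (((n:ℝ)+1)*T/(N:ℝ))) 0 with hneg | hposG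
          · have h1 : (1-c3*Δ)^(n+1) * (Yh (n+1) - Z (((n:ℝ)+1)*T/(N:ℝ))) ≤ 0 :=
              mul_nonpos_of_nonneg_of_nonpos hpow_pos.le hneg
            exact h1.trans hQB
          · have h1 : (1-c3*Δ)^(n+1) * (Yh (n+1) - Z (((n:ℝ)+1)*T/(N:ℝ)))
                ≤ 1 * (Yh (n+1) - Z (((n:ℝ)+1)*T/(N:ℝ))) :=
              mul_le_mul_of_nonneg_right hpow_le1 hposG.le
            have hPQ : P ≤ Q := by rw [hQdef]; linarith only [hmY]
            have hnB : (0:ℝ) ≤ ((n:ℝ)+1)*(B'*Δ) :=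
              mul_nonneg (by positivity) (mul_nonneg hB'pos.le hΔ.le)
            linarith only [h1, hG, hPQ, hnB]
        · have hder : ∀ x, phi (((n:ℝ)+1)*T/(N:ℝ)) + d ≤ x →
              HasDerivAt (fun u => b (((n:ℝ)+1)*T/(N:ℝ)) u) (bp (((n:ℝ)+1)*T/(N:ℝ)) x) x :=
            fun x hx => hA4deriv _ hgt' x (by linarith only [hx, hd])
          have hltd : ∀ x, phi (((n:ℝ)+1)*T/(N:ℝ)) + d ≤ x → bp (((n:ℝ)+1)*T/(N:ℝ)) x < c3 :=
            fun x hx => hA4lt _ hgt' x (by linarith only [hx, hd])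
          have hmvt : b (((n:ℝ)+1)*T/(N:ℝ)) (Yh (n+1))
              ≤ b (((n:ℝ)+1)*T/(N:ℝ)) (phi (((n:ℝ)+1)*T/(N:ℝ)) + d)
                + c3 * (Yh (n+1) - (phi (((n:ℝ)+1)*T/(N:ℝ)) + d)) :=
            deriv_bound (fun u => b (((n:ℝ)+1)*T/(N:ℝ)) u) (bp (((n:ℝ)+1)*T/(N:ℝ)))
              c3 (phi (((n:ℝ)+1)*T/(N:ℝ)) + d) (Yh (n+1)) hder hltd hbig.le
          have hBt' : b (((n:ℝ)+1)*T/(N:ℝ)) (phi (((n:ℝ)+1)*T/(N:ℝ)) + d) ≤ B := by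
            have h := hBbd (n+1) hn1
            rw [hcast] at h
            exact h
          have hbb : b (((n:ℝ)+1)*T/(N:ℝ)) (Yh (n+1))
              ≤ B' + c3*(Yh (n+1) - Z (((n:ℝ)+1)*T/(N:ℝ))) := by
            have hZ1 := (abs_le.mp hZt').2
            have hBle := le_max_left B 0
            have m1 := mul_le_mul_of_nonneg_left hZ1 hc3.le
            have m2 : c3*(-(|phi 0| + K*T^lam)) ≤ c3*(phi (((n:ℝ)+1)*T/(N:ℝ))) := by
              apply mul_le_mul_of_nonneg_left _ hc3.le
              have h := (abs_le.mp hφt').1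
              linarith only [h]
            have m3 : (0:ℝ) ≤ c3*d := mul_nonneg hc3.le hd.le
            rw [hB'def]
            linarith only [hmvt, hBt', hBle, m1, m2, m3]
          have hYZ : Yh (n+1) - Z (((n:ℝ)+1)*T/(N:ℝ))
              = (Yh n - Z ((n:ℝ)*T/(N:ℝ))) + b (((n:ℝ)+1)*T/(N:ℝ)) (Yh (n+1))*Δ := by
            linear_combination heq
          have hbΔ := mul_le_mul_of_nonneg_right hbb hΔ.le
          have hrec : (1-c3*Δ)*(Yh (n+1) - Z (((n:ℝ)+1)*T/(N:ℝ)))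
              ≤ (Yh n - Z ((n:ℝ)*T/(N:ℝ))) + B'*Δ := by linarith only [hYZ, hbΔ]
          have hstep2 : (1-c3*Δ)^(n+1) * (Yh (n+1) - Z (((n:ℝ)+1)*T/(N:ℝ)))
              ≤ (1-c3*Δ)^n * ((Yh n - Z ((n:ℝ)*T/(N:ℝ))) + B'*Δ) := by
            have h := mul_le_mul_of_nonneg_left hrec (pow_nonneg h1c3.le n)
            calc (1-c3*Δ)^(n+1) * (Yh (n+1) - Z (((n:ℝ)+1)*T/(N:ℝ)))
                = (1-c3*Δ)^n * ((1-c3*Δ)*(Yh (n+1) - Z (((n:ℝ)+1)*T/(N:ℝ)))) := by ring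
              _ ≤ _ := h
          have hB'Δ : (1-c3*Δ)^n*(B'*Δ) ≤ B'*Δ := by
            have h := mul_le_mul_of_nonneg_right hpow_le1' (mul_nonneg hB'pos.le hΔ.le)
            linarith only [h, one_mul (B'*Δ)]
          linarith only [hstep2, hB'Δ, ih']
    intro n hn
    have hcl := claim n hn
    have hnle : (n:ℝ) ≤ (N:ℝ) := by exact_mod_cast hn
    have hnΔT : (n:ℝ)*Δ ≤ T := by
      rw [hΔdef, ← mul_div_assoc, div_le_iff₀ hNpos]
      have h := mul_le_mul_of_nonneg_left hnle hT.le
      linarith only [h]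
    have hnΔ : (n:ℝ)*(B'*Δ) ≤ B'*T := by
      have h := mul_le_mul_of_nonneg_left hnΔT hB'pos.le
      linarith only [h]
    have hQBT : (1-c3*Δ)^n * (Yh n - Z ((n:ℝ)*T/(N:ℝ))) ≤ Q + B'*T := by
      linarith only [hcl, hnΔ]
    have hBTpos : (0:ℝ) ≤ Q + B'*T := by
      have h : (0:ℝ) ≤ B'*T := mul_nonneg hB'pos.le hT.le
      linarith only [h, hQpos]
    have hrn : (1/(1-c3*Δ))^n ≤ E := by
      calc (1/(1-c3*Δ))^n ≤ (Real.exp (c3*Δ/δ0))^n :=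
            pow_le_pow_left₀ (one_div_pos.mpr h1c3).le hr n
        _ = Real.exp ((n:ℝ)*(c3*Δ/δ0)) := (Real.exp_nat_mul _ n).symm
        _ ≤ E := by
            rw [hEdef]
            apply Real.exp_le_exp.mpr
            rw [show (n:ℝ)*(c3*Δ/δ0) = (c3*((n:ℝ)*Δ))/δ0 by ring]
            exact (div_le_div_iff_of_pos_right hδ0).mpr (mul_le_mul_of_nonneg_left hnΔT hc3.le)
    have hGn : Yh n - Z ((n:ℝ)*T/(N:ℝ)) ≤ E*(Q + B'*T) := by
      rcases le_or_gt (Yh n - Z ((n:ℝ)*T/(N:ℝ))) 0 with hneg | hposG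
      · have hEQ : (0:ℝ) ≤ E*(Q + B'*T) := mul_nonneg hEpos.le hBTpos
        exact hneg.trans hEQ
      · have hpowpos : (0:ℝ) < (1-c3*Δ)^n := pow_pos h1c3 n
        have h1 : Yh n - Z ((n:ℝ)*T/(N:ℝ))
            = ((1-c3*Δ)^n * (Yh n - Z ((n:ℝ)*T/(N:ℝ)))) * (1/(1-c3*Δ))^n := by
          rw [one_div, inv_pow]
          field_simp
        rw [h1]
        calc ((1-c3*Δ)^n * (Yh n - Z ((n:ℝ)*T/(N:ℝ)))) * (1/(1-c3*Δ))^n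
            ≤ (Q + B'*T) * E :=
              mul_le_mul hQBT hrn (pow_nonneg (one_div_pos.mpr h1c3).le n) hBTpos
          _ = E*(Q + B'*T) := by ring
    have hZn : Z ((n:ℝ)*T/(N:ℝ)) ≤ Lam*T^lam := (abs_le.mp (hZbd n hn)).2
    have heq2 : Q + B'*T = C0 + Lam*C1 := by
      rw [hQdef, hPdef, hB'def, hC0def, hC1def]; ring
    rw [heq2] at hGn
    linarith only [hGn, hZn]
end
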